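/- arXiv:1602.02345 — 2 statements merged into one kernel-verified Lean document; each statement's English description precedes it below -/
import Mathlib

section
/- Let n = 2. Suppose the family {F_θ} satisfies the MLR assumption (Assumption 2) and T_1 and T_2 are positively regression dependent in the sense that for every bounded measurable nondecreasing φ : ℝ → ℝ and all u ≤ u′ for which the conditioning events have positive probability, E[φ(T_1) | T_2 ≥ u] ≤ E[φ(T_1) | T_2 ≥ u′] and E[φ(T_1) | T_2 < u] ≤ E[φ(T_1) | T_2 < u′] (Assumption 5). Then Procedure 2 (both critical constants equal to α) satisfies mdFWER ≤ α for every configuration of parameters (θ_1, θ_2) ∈ ℝ². -/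
open MeasureTheory Set
open scoped ENNReal NNReal

section Helpers

variable {Ω : Type*} [MeasurableSpace Ω]

lemma mdfwer_lintegral_mlr_swap {u v : ℝ → ℝ≥0∞} (hu : Measurable u) (hv : Measurable v)
    {I J : Set ℝ} (hIJ : ∀ x ∈ I, ∀ y ∈ J, u x * v y ≤ u y * v x) :
    (∫⁻ x in I, u x) * (∫⁻ y in J, v y) ≤ (∫⁻ y in J, u y) * (∫⁻ x in I, v x) := by
  calc (∫⁻ x in I, u x) * (∫⁻ y in J, v y)
      = ∫⁻ x in I, (u x * ∫⁻ y in J, v y) := (lintegral_mul_const _ hu).symm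
    _ = ∫⁻ x in I, ∫⁻ y in J, u x * v y := lintegral_congr fun x => (lintegral_const_mul _ hv).symm
    _ ≤ ∫⁻ x in I, (∫⁻ y in J, u y) * v x := by
        refine setLIntegral_mono (measurable_const.mul hv) (fun x hx => ?_)
        calc ∫⁻ y in J, u x * v y ≤ ∫⁻ y in J, u y * v x :=
              setLIntegral_mono (hu.mul measurable_const) (fun y hy => hIJ x hx y hy)
          _ = (∫⁻ y in J, u y) * v x := lintegral_mul_const _ hu
    _ = (∫⁻ y in J, u y) * ∫⁻ x in I, v x := lintegral_const_mul _ hv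

lemma mdfwer_map_eq_withDensity (Pr : Measure Ω) [IsProbabilityMeasure Pr]
    (T : Ω → ℝ) (hT : Measurable T)
    (g : ℝ → ℝ) (hg0 : ∀ x, 0 ≤ g x) (hgm : Measurable g)
    (hcdf : ∀ x : ℝ, (Pr {ω | T ω ≤ x}).toReal = ∫ t in Set.Iic x, g t) :
    Measure.map T Pr = volume.withDensity (fun t => ENNReal.ofReal (g t)) := by
  have hTae : AEMeasurable T Pr := hT.aemeasurable
  have hprob : IsProbabilityMeasure (Measure.map T Pr) := Measure.isProbabilityMeasure_map hTae
  have hIic : ∀ x : ℝ, Measure.map T Pr (Set.Iic x) = Pr {ω | T ω ≤ x} := by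
    intro x
    rw [Measure.map_apply hT measurableSet_Iic]
    rfl
  set μ : Measure ℝ := volume.withDensity (fun t => ENNReal.ofReal (g t)) with hμ
  -- a point far to the right with big mass
  have htend := tendsto_measure_Iic_atTop (Measure.map T Pr)
  have hμIic : ∀ x : ℝ, μ (Set.Iic x) = ∫⁻ t in Set.Iic x, ENNReal.ofReal (g t) := by
    intro x
    rw [hμ, withDensity_apply _ measurableSet_Iic]
  have hnnnorm : ∀ t : ℝ, ‖g t‖ₑ = ENNReal.ofReal (g t) := fun t =>
    Real.enorm_eq_ofReal (hg0 t)
  have key : ∀ x : ℝ, μ (Set.Iic x) = Measure.map T Pr (Set.Iic x) := by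
    intro x
    have hfin : (∫⁻ t in Set.Iic x, ENNReal.ofReal (g t)) ≠ ⊤ := by
      intro htop
      -- find y ≥ x with mass > 1/2
      have h1 : ∀ᶠ y : ℝ in Filter.atTop,
          Measure.map T Pr (Set.Iic y) ∈ Set.Ioi (1/2 : ℝ≥0∞) := by
        refine htend.eventually_mem ?_
        have : (Measure.map T Pr) Set.univ = 1 := measure_univ
        rw [this]
        exact Ioi_mem_nhds (by norm_num)
      obtain ⟨y, hy, hxy⟩ := (h1.and (Filter.eventually_ge_atTop x)).exists
      -- lintegral over Iic y is also infinite
      have hmono : (∫⁻ t in Set.Iic x, ENNReal.ofReal (g t))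
          ≤ ∫⁻ t in Set.Iic y, ENNReal.ofReal (g t) :=
        lintegral_mono' (Measure.restrict_mono (Set.Iic_subset_Iic.2 hxy) le_rfl) le_rfl
      have htop' : (∫⁻ t in Set.Iic y, ENNReal.ofReal (g t)) = ⊤ :=
        top_le_iff.mp (htop ▸ hmono)
      -- hence g is not integrable on Iic y, hence the Bochner integral is 0
      have hnint : ¬ IntegrableOn g (Set.Iic y) volume := by
        intro hint
        have := hint.2
        rw [HasFiniteIntegral] at this
        simp_rw [hnnnorm] at this
        exact absurd htop' this.ne
      have h0 : (∫ t in Set.Iic y, g t) = 0 := integral_undef hnint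
      have := hcdf y
      rw [h0] at this
      have hzero : Pr {ω | T ω ≤ y} = 0 := by
        have hne : Pr {ω | T ω ≤ y} ≠ ⊤ := measure_ne_top _ _
        exact (ENNReal.toReal_eq_zero_iff _).mp this |>.resolve_right hne
      rw [hIic y, hzero] at hy
      simp at hy
    -- now g is integrable on Iic x
    have hint : IntegrableOn g (Set.Iic x) volume := by
      refine ⟨hgm.aestronglyMeasurable, ?_⟩
      rw [HasFiniteIntegral]
      simp_rw [hnnnorm]
      exact lt_top_iff_ne_top.mpr hfin
    have := ofReal_integral_eq_lintegral_ofReal hint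
      (Filter.Eventually.of_forall fun t => hg0 t)
    rw [hμIic x, ← this, ← hcdf x, ENNReal.ofReal_toReal (measure_ne_top _ _), hIic x]
  have hfinμ : IsFiniteMeasure μ := by
    constructor
    have hle : ∀ x : ℝ, μ (Set.Iic x) ≤ 1 := by
      intro x; rw [key x]; exact prob_le_one
    have := le_of_tendsto (tendsto_measure_Iic_atTop μ) (Filter.Eventually.of_forall hle)
    exact lt_of_le_of_lt this ENNReal.one_lt_top
  exact MeasureTheory.Measure.ext_of_Iic (Measure.map T Pr) μ (fun x => (key x).symm)

lemma mdfwer_singleton_zero (Pr : Measure Ω) [IsProbabilityMeasure Pr]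
    (T : Ω → ℝ) (hT : Measurable T) {g : ℝ → ℝ≥0∞}
    (hmap : Measure.map T Pr = volume.withDensity g) (x : ℝ) :
    Pr {ω | T ω = x} = 0 := by
  have : Pr {ω | T ω = x} = Measure.map T Pr {x} := by
    rw [Measure.map_apply hT (measurableSet_singleton x)]; rfl
  rw [this, hmap]
  exact withDensity_absolutelyContinuous volume g (Real.volume_singleton)

end Helpers

section Helpers2

variable {Ω : Type*} [MeasurableSpace Ω]

lemma mdfwer_cdf_lt (Pr : Measure Ω) [IsProbabilityMeasure Pr]
    (T : Ω → ℝ) (hT : Measurable T) {G : ℝ → ℝ}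
    (hcdf : ∀ x : ℝ, (Pr {ω | T ω ≤ x}).toReal = G x)
    (hsing : ∀ x : ℝ, Pr {ω | T ω = x} = 0) (x : ℝ) :
    (Pr {ω | T ω < x}).toReal = G x := by
  have hsub : {ω | T ω ≤ x} ⊆ {ω | T ω < x} ∪ {ω | T ω = x} := by
    intro ω hω
    rcases lt_or_eq_of_le (show T ω ≤ x from hω) with h | h
    · exact Or.inl h
    · exact Or.inr h
  have h1 : Pr {ω | T ω ≤ x} ≤ Pr {ω | T ω < x} := by
    calc Pr {ω | T ω ≤ x} ≤ Pr ({ω | T ω < x} ∪ {ω | T ω = x}) := measure_mono hsub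
      _ ≤ Pr {ω | T ω < x} + Pr {ω | T ω = x} := measure_union_le _ _
      _ = Pr {ω | T ω < x} := by rw [hsing x, add_zero]
  have h2 : Pr {ω | T ω < x} ≤ Pr {ω | T ω ≤ x} :=
    measure_mono fun ω hω => le_of_lt (show T ω < x from hω)
  rw [← hcdf x, le_antisymm h2 h1]

lemma mdfwer_cdf_ge (Pr : Measure Ω) [IsProbabilityMeasure Pr]
    (T : Ω → ℝ) (hT : Measurable T) {G : ℝ → ℝ}
    (hcdf : ∀ x : ℝ, (Pr {ω | T ω ≤ x}).toReal = G x)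
    (hsing : ∀ x : ℝ, Pr {ω | T ω = x} = 0) (x : ℝ) :
    (Pr {ω | x ≤ T ω}).toReal = 1 - G x := by
  have hset : {ω | x ≤ T ω} = {ω | T ω < x}ᶜ := by
    ext ω; simp [not_lt]
  have hmeas : MeasurableSet {ω | T ω < x} := hT measurableSet_Iio
  rw [hset, prob_compl_eq_one_sub hmeas,
    ENNReal.toReal_sub_of_le prob_le_one ENNReal.one_ne_top, ENNReal.toReal_one,
    mdfwer_cdf_lt Pr T hT hcdf hsing x]

lemma mdfwer_cdf_gt (Pr : Measure Ω) [IsProbabilityMeasure Pr]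
    (T : Ω → ℝ) (hT : Measurable T) {G : ℝ → ℝ}
    (hcdf : ∀ x : ℝ, (Pr {ω | T ω ≤ x}).toReal = G x)
    (hsing : ∀ x : ℝ, Pr {ω | T ω = x} = 0) (x : ℝ) :
    (Pr {ω | x < T ω}).toReal = 1 - G x := by
  have hset : {ω | x < T ω} = {ω | T ω ≤ x}ᶜ := by
    ext ω; simp [not_le]
  have hmeas : MeasurableSet {ω | T ω ≤ x} := hT measurableSet_Iic
  rw [hset, prob_compl_eq_one_sub hmeas,
    ENNReal.toReal_sub_of_le prob_le_one ENNReal.one_ne_top, ENNReal.toReal_one, hcdf x]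

lemma mdfwer_split (Pr : Measure Ω) [IsFiniteMeasure Pr] (A : Set Ω) {B : Set Ω}
    (hB : MeasurableSet B) :
    (Pr A).toReal = (Pr (A ∩ B)).toReal + (Pr (A ∩ Bᶜ)).toReal := by
  have h := measure_inter_add_diff A hB (μ := Pr)
  rw [Set.diff_eq] at h
  rw [← ENNReal.toReal_add (measure_ne_top _ _) (measure_ne_top _ _), h]

lemma mdfwer_union2 (Pr : Measure Ω) [IsFiniteMeasure Pr] (X Y : Set Ω) :
    (Pr (X ∪ Y)).toReal ≤ (Pr X).toReal + (Pr Y).toReal := by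
  calc (Pr (X ∪ Y)).toReal ≤ (Pr X + Pr Y).toReal :=
        ENNReal.toReal_mono (ENNReal.add_ne_top.mpr ⟨measure_ne_top _ _, measure_ne_top _ _⟩)
          (measure_union_le _ _)
    _ = (Pr X).toReal + (Pr Y).toReal :=
        ENNReal.toReal_add (measure_ne_top _ _) (measure_ne_top _ _)

lemma mdfwer_union3 (Pr : Measure Ω) [IsFiniteMeasure Pr] (X Y Z : Set Ω) :
    (Pr (X ∪ Y ∪ Z)).toReal ≤ (Pr X).toReal + (Pr Y).toReal + (Pr Z).toReal := by
  calc (Pr (X ∪ Y ∪ Z)).toReal ≤ (Pr (X ∪ Y)).toReal + (Pr Z).toReal :=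
        mdfwer_union2 Pr _ _
    _ ≤ (Pr X).toReal + (Pr Y).toReal + (Pr Z).toReal := by
        have := mdfwer_union2 Pr X Y; linarith

lemma mdfwer_setIntegral_ind (Pr : Measure Ω) [IsFiniteMeasure Pr] {A B : Set Ω}
    (hA : MeasurableSet A) (φ : Ω → ℝ)
    (hφ1 : ∀ ω ∈ A, φ ω = 1) (hφ0 : ∀ ω, ω ∉ A → φ ω = 0) :
    ∫ ω in B, φ ω ∂Pr = (Pr (B ∩ A)).toReal := by
  have hfun : φ = A.indicator (fun _ => (1 : ℝ)) := funext fun ω => by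
    by_cases hω : ω ∈ A
    · rw [hφ1 ω hω, Set.indicator_of_mem hω]
    · rw [hφ0 ω hω, Set.indicator_of_notMem hω]
  rw [hfun, setIntegral_indicator hA, setIntegral_const, smul_eq_mul, mul_one, measureReal_def]

lemma mdfwer_algebra {a q x1 x2 y : ℝ} (ha : 0 < a) (ha2 : 2 * a < 1)
    (hq : 0 ≤ q) (hx1 : 0 ≤ x1) (hx2 : 0 ≤ x2) (hy : 0 ≤ y)
    (hM : q * (1 - 2 * a) ≤ a * (1 - q - (y + x2)))
    (hP : x1 * (1 - a) ≤ a * y)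
    (hx2a : x2 ≤ a) : q + x1 + x2 ≤ 2 * a := by
  nlinarith [mul_le_mul_of_nonneg_right hx2a (by linarith : (0:ℝ) ≤ 1 - 2 * a)]

end Helpers2

section Helpers3

variable {Ω : Type*} [MeasurableSpace Ω]

lemma mdfwer_Ioc_toReal (Pr : Measure Ω) [IsProbabilityMeasure Pr] (T : Ω → ℝ)
    (hT : Measurable T) {G : ℝ → ℝ}
    (hcdf : ∀ x : ℝ, (Pr {ω | T ω ≤ x}).toReal = G x) {x y : ℝ} (hxy : x ≤ y) :
    (Pr {ω | x < T ω ∧ T ω ≤ y}).toReal = G y - G x := by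
  have hu : {ω | T ω ≤ y} = {ω | T ω ≤ x} ∪ {ω | x < T ω ∧ T ω ≤ y} := by
    ext ω
    simp only [Set.mem_setOf_eq, Set.mem_union]
    constructor
    · intro h
      rcases le_or_gt (T ω) x with h' | h'
      exacts [Or.inl h', Or.inr ⟨h', h⟩]
    · rintro (h | ⟨_, h⟩)
      exacts [le_trans h hxy, h]
  have hdisj : Disjoint {ω | T ω ≤ x} {ω | x < T ω ∧ T ω ≤ y} := by
    rw [Set.disjoint_left]
    rintro ω h ⟨h', _⟩
    exact absurd (show T ω ≤ x from h) (not_le.mpr h')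
  have hmeas : MeasurableSet {ω | x < T ω ∧ T ω ≤ y} := by
    have : {ω | x < T ω ∧ T ω ≤ y} = {ω | x < T ω} ∩ {ω | T ω ≤ y} := rfl
    rw [this]
    exact (hT measurableSet_Ioi).inter (hT measurableSet_Iic)
  have h1 := measure_union hdisj hmeas (μ := Pr)
  rw [← hu] at h1
  have h2 := congrArg ENNReal.toReal h1
  rw [ENNReal.toReal_add (measure_ne_top _ _) (measure_ne_top _ _), hcdf y, hcdf x] at h2
  linarith

lemma mdfwer_inter_le_lt (Pr : Measure Ω) [IsProbabilityMeasure Pr] (T : Ω → ℝ)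
    (hsing : ∀ x : ℝ, Pr {ω | T ω = x} = 0) (A : Set Ω) (x : ℝ) :
    Pr (A ∩ {ω | T ω ≤ x}) = Pr (A ∩ {ω | T ω < x}) := by
  apply le_antisymm
  · calc Pr (A ∩ {ω | T ω ≤ x})
        ≤ Pr ((A ∩ {ω | T ω < x}) ∪ {ω | T ω = x}) := by
          apply measure_mono
          rintro ω ⟨hA, h⟩
          rcases lt_or_eq_of_le (show T ω ≤ x from h) with h' | h'
          exacts [Or.inl ⟨hA, h'⟩, Or.inr h']
      _ ≤ Pr (A ∩ {ω | T ω < x}) + Pr {ω | T ω = x} := measure_union_le _ _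
      _ = Pr (A ∩ {ω | T ω < x}) := by rw [hsing x, add_zero]
  · exact measure_mono (Set.inter_subset_inter_right A fun ω h => le_of_lt (show T ω < x from h))

end Helpers3

section Helpers4

variable {Ω : Type*} [MeasurableSpace Ω]

lemma mdfwer_exists_hi (Pr : Measure Ω) [IsProbabilityMeasure Pr] (T : Ω → ℝ)
    (hT : Measurable T) {c : ℝ} (hc0 : 0 ≤ c) (hc : c < 1) :
    ∃ b : ℝ, c ≤ (Pr {ω | T ω ≤ b}).toReal := by
  have htend := tendsto_measure_Iic_atTop (Measure.map T Pr)
  have huniv : (Measure.map T Pr) Set.univ = 1 :=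
    (Measure.isProbabilityMeasure_map hT.aemeasurable).measure_univ
  rw [huniv] at htend
  have hev : ∀ᶠ b : ℝ in Filter.atTop,
      Measure.map T Pr (Set.Iic b) ∈ Set.Ioi (ENNReal.ofReal c) :=
    htend.eventually_mem (Ioi_mem_nhds (ENNReal.ofReal_lt_one.mpr hc))
  obtain ⟨b, hb⟩ := hev.exists
  refine ⟨b, ?_⟩
  have hmap : Measure.map T Pr (Set.Iic b) = Pr {ω | T ω ≤ b} := by
    rw [Measure.map_apply hT measurableSet_Iic]; rfl
  rw [hmap] at hb
  have := ENNReal.toReal_mono (measure_ne_top _ _) (le_of_lt hb)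
  rwa [ENNReal.toReal_ofReal hc0] at this

lemma mdfwer_exists_lo (Pr : Measure Ω) [IsProbabilityMeasure Pr] (T : Ω → ℝ)
    (hT : Measurable T) {c : ℝ} (hc0 : 0 < c) :
    ∃ b : ℝ, (Pr {ω | T ω ≤ b}).toReal ≤ c := by
  have htend := tendsto_measure_Ici_atBot (Measure.map T Pr)
  have huniv : (Measure.map T Pr) Set.univ = 1 :=
    (Measure.isProbabilityMeasure_map hT.aemeasurable).measure_univ
  rw [huniv] at htend
  have hev : ∀ᶠ b : ℝ in Filter.atBot,
      Measure.map T Pr (Set.Ici b) ∈ Set.Ioi (ENNReal.ofReal (1 - c)) :=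
    htend.eventually_mem (Ioi_mem_nhds (ENNReal.ofReal_lt_one.mpr (by linarith)))
  obtain ⟨b, hb⟩ := hev.exists
  refine ⟨b - 1, ?_⟩
  have hmap : Measure.map T Pr (Set.Ici b) = Pr {ω | b ≤ T ω} := by
    rw [Measure.map_apply hT measurableSet_Ici]; rfl
  rw [hmap] at hb
  have hb' : 1 - c ≤ (Pr {ω | b ≤ T ω}).toReal := by
    have := ENNReal.toReal_mono (measure_ne_top _ _) (le_of_lt hb)
    rcases le_or_gt 0 (1 - c) with h | h
    · rwa [ENNReal.toReal_ofReal h] at this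
    · linarith [ENNReal.toReal_nonneg (a := Pr {ω | b ≤ T ω})]
  have hdisj : Disjoint {ω | T ω ≤ b - 1} {ω | b ≤ T ω} := by
    rw [Set.disjoint_left]
    intro ω h1 h2
    have : T ω ≤ b - 1 := h1
    have : b ≤ T ω := h2
    linarith
  have hsum : Pr {ω | T ω ≤ b - 1} + Pr {ω | b ≤ T ω} ≤ 1 := by
    rw [← measure_union hdisj (hT measurableSet_Ici)]
    exact prob_le_one
  have := ENNReal.toReal_mono ENNReal.one_ne_top hsum
  rw [ENNReal.toReal_add (measure_ne_top _ _) (measure_ne_top _ _), ENNReal.toReal_one] at this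
  linarith

end Helpers4

set_option maxHeartbeats 2000000 in
/-- Proposition 1: For n = 2, under MLR (Assumption 2) and positive
regression dependence of T₁ on T₂ (Assumption 5), Procedure 2 (both critical
constants equal to α) satisfies mdFWER ≤ α for every configuration (θ₁, θ₂). -/
theorem procedure2_controls_mdFWER_two_PRDS
    {Ω : Type*} [MeasurableSpace Ω] (Pr : Measure Ω) [IsProbabilityMeasure Pr]
    (F : ℝ → ℝ → ℝ)
    (hFcont : ∀ θ, Continuous (F θ))
    (hFmono : ∀ θ, Monotone (F θ))
    (hF0strict : StrictMono (F 0))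
    (hFsym : ∀ x : ℝ, F 0 (-x) = 1 - F 0 x)
    (hstoch : ∀ θ θ' : ℝ, θ ≤ θ' → ∀ x, F θ' x ≤ F θ x)
    -- MLR assumption (Assumption 2)
    (f : ℝ → ℝ → ℝ)
    (hf_nonneg : ∀ θ x, 0 ≤ f θ x)
    (hf_meas : ∀ θ, Measurable (f θ))
    (hf_cdf : ∀ θ x, F θ x = ∫ t in Set.Iic x, f θ t)
    (hMLR : ∀ θ θ' : ℝ, θ < θ' → ∀ x₁ x₂ : ℝ, x₁ < x₂ →
      f θ' x₁ * f θ x₂ ≤ f θ' x₂ * f θ x₁)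
    (θ₁ θ₂ : ℝ) (T₁ T₂ : Ω → ℝ) (hT₁ : Measurable T₁) (hT₂ : Measurable T₂)
    (hcdf₁ : ∀ x : ℝ, (Pr {ω | T₁ ω ≤ x}).toReal = F θ₁ x)
    (hcdf₂ : ∀ x : ℝ, (Pr {ω | T₂ ω ≤ x}).toReal = F θ₂ x)
    -- Assumption 5 (positive regression dependence of T₁ on T₂)
    (hPRDS : ∀ φ : ℝ → ℝ, Measurable φ → Monotone φ → (∃ C, ∀ x, |φ x| ≤ C) →
      ∀ u u' : ℝ, u ≤ u' →
        (Pr {ω | u ≤ T₂ ω} ≠ 0 → Pr {ω | u' ≤ T₂ ω} ≠ 0 →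
          (∫ ω in {ω | u ≤ T₂ ω}, φ (T₁ ω) ∂Pr) / (Pr {ω | u ≤ T₂ ω}).toReal
            ≤ (∫ ω in {ω | u' ≤ T₂ ω}, φ (T₁ ω) ∂Pr)
              / (Pr {ω | u' ≤ T₂ ω}).toReal) ∧
        (Pr {ω | T₂ ω < u} ≠ 0 → Pr {ω | T₂ ω < u'} ≠ 0 →
          (∫ ω in {ω | T₂ ω < u}, φ (T₁ ω) ∂Pr) / (Pr {ω | T₂ ω < u}).toReal
            ≤ (∫ ω in {ω | T₂ ω < u'}, φ (T₁ ω) ∂Pr)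
              / (Pr {ω | T₂ ω < u'}).toReal))
    (α : ℝ) (hα : α ∈ Set.Ioo (0 : ℝ) 1) :
    (Pr {ω | ∃ i : Fin 2,
        (∀ j : Fin 2, j ≤ i →
          2 * min (F 0 ((![T₁, T₂] j) ω)) (1 - F 0 ((![T₁, T₂] j) ω)) ≤ α) ∧
        ((![θ₁, θ₂] i : ℝ) = 0 ∨
          ((![θ₁, θ₂] i : ℝ) ≠ 0 ∧ (![θ₁, θ₂] i : ℝ) * (![T₁, T₂] i) ω < 0))}).toReal
      ≤ α := by
  obtain ⟨hα0, hα1⟩ := hα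
  set a : ℝ := α / 2 with ha_def
  have ha0 : 0 < a := by rw [ha_def]; linarith
  have ha1 : 2 * a < 1 := by rw [ha_def]; linarith
  have haa : 2 * a = α := by rw [ha_def]; ring
  -- identification of the distributions of T₁ and T₂
  have hmap1 : Measure.map T₁ Pr = volume.withDensity (fun t => ENNReal.ofReal (f θ₁ t)) :=
    mdfwer_map_eq_withDensity Pr T₁ hT₁ (f θ₁) (hf_nonneg θ₁) (hf_meas θ₁)
      (fun x => by rw [hcdf₁ x, hf_cdf θ₁ x])
  have hmap2 : Measure.map T₂ Pr = volume.withDensity (fun t => ENNReal.ofReal (f θ₂ t)) :=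
    mdfwer_map_eq_withDensity Pr T₂ hT₂ (f θ₂) (hf_nonneg θ₂) (hf_meas θ₂)
      (fun x => by rw [hcdf₂ x, hf_cdf θ₂ x])
  have hsing1 : ∀ x : ℝ, Pr {ω | T₁ ω = x} = 0 := mdfwer_singleton_zero Pr T₁ hT₁ hmap1
  have hsing2 : ∀ x : ℝ, Pr {ω | T₂ ω = x} = 0 := mdfwer_singleton_zero Pr T₂ hT₂ hmap2
  have hlt1 := mdfwer_cdf_lt Pr T₁ hT₁ hcdf₁ hsing1
  have hge1 := mdfwer_cdf_ge Pr T₁ hT₁ hcdf₁ hsing1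
  have hgt1 := mdfwer_cdf_gt Pr T₁ hT₁ hcdf₁ hsing1
  have hlt2 := mdfwer_cdf_lt Pr T₂ hT₂ hcdf₂ hsing2
  have hge2 := mdfwer_cdf_ge Pr T₂ hT₂ hcdf₂ hsing2
  have hgt2 := mdfwer_cdf_gt Pr T₂ hT₂ hcdf₂ hsing2
  -- existence of the critical value c₂ with F 0 c₂ = 1 - a
  obtain ⟨c2, hc2⟩ : ∃ c2 : ℝ, F 0 c2 = 1 - a := by
    obtain ⟨b, hb⟩ : ∃ b : ℝ, 1 - a ≤ F 0 b := by
      rcases le_total 0 θ₁ with h | h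
      · obtain ⟨b, hb⟩ := mdfwer_exists_hi Pr T₁ hT₁ (c := 1 - a) (by linarith) (by linarith)
        rw [hcdf₁ b] at hb
        exact ⟨b, hb.trans (hstoch 0 θ₁ h b)⟩
      · obtain ⟨b', hb'⟩ := mdfwer_exists_lo Pr T₁ hT₁ (c := a) ha0
        rw [hcdf₁ b'] at hb'
        refine ⟨-b', ?_⟩
        rw [hFsym b']
        have : F 0 b' ≤ a := le_trans (hstoch θ₁ 0 h b') hb'
        linarith
    have hnb : F 0 (-b) ≤ 1 - a := by
      rw [hFsym b]; linarith
    have horder : -b ≤ b := by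
      by_contra hlt
      push_neg at hlt
      have := hF0strict hlt
      linarith
    obtain ⟨c2, _, hc2⟩ := intermediate_value_Icc horder (hFcont 0).continuousOn ⟨hnb, hb⟩
    exact ⟨c2, hc2⟩
  have hFc1 : F 0 (-c2) = a := by rw [hFsym c2, hc2]; ring
  set c1 : ℝ := -c2 with hc1_def
  have hF00 : F 0 0 = 1 / 2 := by
    have := hFsym 0
    rw [neg_zero] at this
    linarith
  have hc2pos : 0 < c2 := by
    have : F 0 0 < F 0 c2 := by rw [hF00, hc2]; linarith
    exact hF0strict.lt_iff_lt.mp this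
  have hc1neg : c1 < 0 := by rw [hc1_def]; linarith
  have hc12 : c1 < c2 := by linarith
  -- p-value characterization
  have hPval : ∀ t : ℝ, 2 * min (F 0 t) (1 - F 0 t) ≤ α ↔ (t ≤ c1 ∨ c2 ≤ t) := by
    intro t
    have hmin : 2 * min (F 0 t) (1 - F 0 t) ≤ α ↔ (F 0 t ≤ a ∨ 1 - F 0 t ≤ a) := by
      constructor
      · intro h
        exact min_le_iff.mp (by linarith [haa] : min (F 0 t) (1 - F 0 t) ≤ a)
      · intro h
        have := min_le_iff.mpr h
        linarith [haa]
    rw [hmin]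
    constructor
    · rintro (h | h)
      · left
        exact hF0strict.le_iff_le.mp (by rw [hFc1]; exact h)
      · right
        refine hF0strict.le_iff_le.mp ?_
        rw [hc2]
        linarith
    · rintro (h | h)
      · left
        calc F 0 t ≤ F 0 c1 := hFmono 0 h
          _ = a := hFc1
      · right
        have : F 0 c2 ≤ F 0 t := hFmono 0 h
        rw [hc2] at this
        linarith
  -- reduction of the error event
  have hevent : ∀ ω : Ω, (∃ i : Fin 2,
      (∀ j : Fin 2, j ≤ i →
        2 * min (F 0 ((![T₁, T₂] j) ω)) (1 - F 0 ((![T₁, T₂] j) ω)) ≤ α) ∧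
      ((![θ₁, θ₂] i : ℝ) = 0 ∨
        ((![θ₁, θ₂] i : ℝ) ≠ 0 ∧ (![θ₁, θ₂] i : ℝ) * (![T₁, T₂] i) ω < 0))) →
      ((T₁ ω ≤ c1 ∨ c2 ≤ T₁ ω) ∧ (θ₁ = 0 ∨ (θ₁ ≠ 0 ∧ θ₁ * T₁ ω < 0))) ∨
      ((T₁ ω ≤ c1 ∨ c2 ≤ T₁ ω) ∧ (T₂ ω ≤ c1 ∨ c2 ≤ T₂ ω) ∧
        (θ₂ = 0 ∨ (θ₂ ≠ 0 ∧ θ₂ * T₂ ω < 0))) := by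
    rintro ω ⟨i, hall, herr⟩
    fin_cases i
    · left
      have h0 := hall 0 le_rfl
      simp only [Matrix.cons_val_zero] at h0 herr ⊢
      exact ⟨(hPval _).mp h0, herr⟩
    · right
      have h0 := hall 0 (by decide)
      have h1 := hall 1 le_rfl
      simp only [Matrix.cons_val_zero, Matrix.cons_val_one, Matrix.head_cons] at h0 h1 herr
      exact ⟨(hPval _).mp h0, (hPval _).mp h1, herr⟩
  have hL1 : ∀ s : Set ℝ, MeasurableSet s →
      (∫⁻ t in s, ENNReal.ofReal (f θ₁ t)) = Pr (T₁ ⁻¹' s) := by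
    intro s hs
    rw [← withDensity_apply _ hs, ← hmap1, Measure.map_apply hT₁ hs]
  have hL2 : ∀ s : Set ℝ, MeasurableSet s →
      (∫⁻ t in s, ENNReal.ofReal (f θ₂ t)) = Pr (T₂ ⁻¹' s) := by
    intro s hs
    rw [← withDensity_apply _ hs, ← hmap2, Measure.map_apply hT₂ hs]
  have h1a : (0:ℝ) < 1 - a := by linarith
  rcases lt_trichotomy θ₁ 0 with h1 | h1 | h1
  · -- θ₁ < 0
    rcases lt_trichotomy θ₂ 0 with h2 | h2 | h2
    · -- θ₂ < 0 : easy
      have hsub : {ω | ∃ i : Fin 2,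
          (∀ j : Fin 2, j ≤ i →
            2 * min (F 0 ((![T₁, T₂] j) ω)) (1 - F 0 ((![T₁, T₂] j) ω)) ≤ α) ∧
          ((![θ₁, θ₂] i : ℝ) = 0 ∨
            ((![θ₁, θ₂] i : ℝ) ≠ 0 ∧ (![θ₁, θ₂] i : ℝ) * (![T₁, T₂] i) ω < 0))}
          ⊆ {ω | c2 ≤ T₁ ω} ∪ {ω | c2 ≤ T₂ ω} := by
        intro ω hω
        rcases hevent ω hω with ⟨hP, hE⟩ | ⟨_, hP2, hE2⟩
        · rcases hE with hE | ⟨_, hE⟩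
          · exact absurd hE (ne_of_lt h1)
          · have hT1pos : 0 < T₁ ω := by nlinarith
            rcases hP with hP | hP
            · linarith
            · exact Or.inl hP
        · rcases hE2 with hE | ⟨_, hE⟩
          · exact absurd hE (ne_of_lt h2)
          · have hT2pos : 0 < T₂ ω := by nlinarith
            rcases hP2 with hP | hP
            · linarith
            · exact Or.inr hP
      calc (Pr _).toReal ≤ (Pr ({ω | c2 ≤ T₁ ω} ∪ {ω | c2 ≤ T₂ ω})).toReal :=
            ENNReal.toReal_mono (measure_ne_top _ _) (measure_mono hsub)
        _ ≤ (Pr {ω | c2 ≤ T₁ ω}).toReal + (Pr {ω | c2 ≤ T₂ ω}).toReal := mdfwer_union2 _ _ _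
        _ = (1 - F θ₁ c2) + (1 - F θ₂ c2) := by rw [hge1 c2, hge2 c2]
        _ ≤ a + a := by
            have hh1 : F 0 c2 ≤ F θ₁ c2 := hstoch θ₁ 0 (le_of_lt h1) c2
            have hh2 : F 0 c2 ≤ F θ₂ c2 := hstoch θ₂ 0 (le_of_lt h2) c2
            rw [hc2] at hh1 hh2
            linarith
        _ = α := by linarith [haa]
    · -- θ₂ = 0 : hard mirror case
      subst h2
      have hsub : {ω | ∃ i : Fin 2,
          (∀ j : Fin 2, j ≤ i →
            2 * min (F 0 ((![T₁, T₂] j) ω)) (1 - F 0 ((![T₁, T₂] j) ω)) ≤ α) ∧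
          ((![θ₁, (0:ℝ)] i : ℝ) = 0 ∨
            ((![θ₁, (0:ℝ)] i : ℝ) ≠ 0 ∧ (![θ₁, (0:ℝ)] i : ℝ) * (![T₁, T₂] i) ω < 0))}
          ⊆ {ω | c2 ≤ T₁ ω} ∪ ({ω | T₁ ω ≤ c1} ∩ {ω | c2 ≤ T₂ ω})
            ∪ ({ω | T₁ ω ≤ c1} ∩ {ω | T₂ ω ≤ c1}) := by
        intro ω hω
        rcases hevent ω hω with ⟨hP, hE⟩ | ⟨hP1, hP2, _⟩
        · rcases hE with hE | ⟨_, hE⟩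
          · exact absurd hE (ne_of_lt h1)
          · have hT1pos : 0 < T₁ ω := by nlinarith
            rcases hP with hP | hP
            · exact absurd hP (by intro h; linarith)
            · exact Or.inl (Or.inl hP)
        · rcases hP1 with hP | hP
          · rcases hP2 with hQ | hQ
            · exact Or.inr ⟨hP, hQ⟩
            · exact Or.inl (Or.inr ⟨hP, hQ⟩)
          · exact Or.inl (Or.inl hP)
      -- probabilities
      have hX : (Pr {ω | c2 ≤ T₁ ω}).toReal = 1 - F θ₁ c2 := hge1 c2
      have hsplitA := mdfwer_split Pr {ω | T₁ ω ≤ c1} (B := {ω | c1 ≤ T₂ ω})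
        (hT₂ measurableSet_Ici)
      have hcomplA : {ω | c1 ≤ T₂ ω}ᶜ = {ω | T₂ ω < c1} := by
        ext ω; simp [not_le]
      rw [hcomplA, hcdf₁ c1] at hsplitA
      have hx2eq := mdfwer_inter_le_lt Pr T₂ hsing2 {ω | T₁ ω ≤ c1} c1
      have hx2eq' := congrArg ENNReal.toReal hx2eq
      have hyx : (Pr ({ω | T₁ ω ≤ c1} ∩ {ω | c1 ≤ T₂ ω})).toReal
          + (Pr ({ω | T₁ ω ≤ c1} ∩ {ω | T₂ ω ≤ c1})).toReal = F θ₁ c1 := by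
        linarith [hsplitA, hx2eq']
      -- PRDS step
      have hne1 : Pr {ω | c1 ≤ T₂ ω} ≠ 0 := by
        intro h0
        have h := hge2 c1
        rw [h0, ENNReal.toReal_zero, hFc1] at h
        linarith
      have hne2 : Pr {ω | c2 ≤ T₂ ω} ≠ 0 := by
        intro h0
        have h := hge2 c2
        rw [h0, ENNReal.toReal_zero, hc2] at h
        linarith
      have hφm : Measurable (fun x : ℝ => if c1 < x then (1:ℝ) else 0) :=
        Measurable.ite measurableSet_Ioi measurable_const measurable_const
      have hφmono : Monotone (fun x : ℝ => if c1 < x then (1:ℝ) else 0) := by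
        intro s t hst
        dsimp only
        split_ifs with hs ht
        · exact le_rfl
        · exact absurd (lt_of_lt_of_le hs hst) ht
        · exact zero_le_one
        · exact le_rfl
      have hφbd : ∃ C, ∀ x : ℝ, |(fun x : ℝ => if c1 < x then (1:ℝ) else 0) x| ≤ C := by
        refine ⟨1, fun x => ?_⟩
        dsimp only
        split_ifs <;> simp
      have hPR := (hPRDS _ hφm hφmono hφbd c1 c2 (le_of_lt hc12)).1 hne1 hne2
      have hint1 : (∫ ω in {ω | c1 ≤ T₂ ω}, (if c1 < T₁ ω then (1:ℝ) else 0) ∂Pr)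
          = (Pr ({ω | c1 ≤ T₂ ω} ∩ {ω | c1 < T₁ ω})).toReal :=
        mdfwer_setIntegral_ind Pr (hT₁ measurableSet_Ioi) _
          (fun ω hω => if_pos hω) (fun ω hω => if_neg hω)
      have hint2 : (∫ ω in {ω | c2 ≤ T₂ ω}, (if c1 < T₁ ω then (1:ℝ) else 0) ∂Pr)
          = (Pr ({ω | c2 ≤ T₂ ω} ∩ {ω | c1 < T₁ ω})).toReal :=
        mdfwer_setIntegral_ind Pr (hT₁ measurableSet_Ioi) _
          (fun ω hω => if_pos hω) (fun ω hω => if_neg hω)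
      rw [hint1, hint2, hge2 c1, hge2 c2, hFc1, hc2] at hPR
      rw [div_le_div_iff₀ (by linarith) (by linarith : (0:ℝ) < 1 - (1 - a))] at hPR
      -- complement conversions
      have hcomplW : {ω | c1 < T₁ ω}ᶜ = {ω | T₁ ω ≤ c1} := by
        ext ω; simp [not_lt]
      have hs1 := mdfwer_split Pr {ω | c1 ≤ T₂ ω} (B := {ω | c1 < T₁ ω})
        (hT₁ measurableSet_Ioi)
      rw [hcomplW, hge2 c1, hFc1] at hs1
      have hs2 := mdfwer_split Pr {ω | c2 ≤ T₂ ω} (B := {ω | c1 < T₁ ω})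
        (hT₁ measurableSet_Ioi)
      rw [hcomplW, hge2 c2, hc2] at hs2
      have hPineq : (Pr ({ω | T₁ ω ≤ c1} ∩ {ω | c2 ≤ T₂ ω})).toReal * (1 - a)
          ≤ a * (Pr ({ω | T₁ ω ≤ c1} ∩ {ω | c1 ≤ T₂ ω})).toReal := by
        rw [Set.inter_comm {ω | T₁ ω ≤ c1} {ω | c2 ≤ T₂ ω},
          Set.inter_comm {ω | T₁ ω ≤ c1} {ω | c1 ≤ T₂ ω}]
        nlinarith [hPR, hs1, hs2]
      -- MLR step
      have hpt : ∀ x ∈ Set.Ioc c1 c2, ∀ y ∈ Set.Ioi c2,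
          ENNReal.ofReal (f 0 x) * ENNReal.ofReal (f θ₁ y)
            ≤ ENNReal.ofReal (f 0 y) * ENNReal.ofReal (f θ₁ x) := by
        intro x hx y hy
        have hxy : x < y := lt_of_le_of_lt hx.2 hy
        have h := hMLR θ₁ 0 h1 x y hxy
        calc ENNReal.ofReal (f 0 x) * ENNReal.ofReal (f θ₁ y)
            = ENNReal.ofReal (f 0 x * f θ₁ y) := (ENNReal.ofReal_mul (hf_nonneg 0 x)).symm
          _ ≤ ENNReal.ofReal (f 0 y * f θ₁ x) := ENNReal.ofReal_le_ofReal h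
          _ = ENNReal.ofReal (f 0 y) * ENNReal.ofReal (f θ₁ x) :=
              ENNReal.ofReal_mul (hf_nonneg 0 y)
      have hml := mdfwer_lintegral_mlr_swap
        (u := fun t => ENNReal.ofReal (f 0 t)) (v := fun t => ENNReal.ofReal (f θ₁ t))
        (ENNReal.measurable_ofReal.comp (hf_meas 0))
        (ENNReal.measurable_ofReal.comp (hf_meas θ₁))
        (I := Set.Ioc c1 c2) (J := Set.Ioi c2) hpt
      rw [hL2 _ measurableSet_Ioc, hL1 _ measurableSet_Ioi,
        hL2 _ measurableSet_Ioi, hL1 _ measurableSet_Ioc] at hml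
      have hml' := ENNReal.toReal_mono
        (ENNReal.mul_ne_top (measure_ne_top _ _) (measure_ne_top _ _)) hml
      rw [ENNReal.toReal_mul, ENNReal.toReal_mul] at hml'
      have hpre1 : T₁ ⁻¹' Set.Ioi c2 = {ω | c2 < T₁ ω} := rfl
      have hpre2 : T₁ ⁻¹' Set.Ioc c1 c2 = {ω | c1 < T₁ ω ∧ T₁ ω ≤ c2} := rfl
      have hpre3 : T₂ ⁻¹' Set.Ioi c2 = {ω | c2 < T₂ ω} := rfl
      have hpre4 : T₂ ⁻¹' Set.Ioc c1 c2 = {ω | c1 < T₂ ω ∧ T₂ ω ≤ c2} := rfl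
      rw [hpre1, hpre2, hpre3, hpre4, hgt1 c2, hgt2 c2,
        mdfwer_Ioc_toReal Pr T₁ hT₁ hcdf₁ (le_of_lt hc12),
        mdfwer_Ioc_toReal Pr T₂ hT₂ hcdf₂ (le_of_lt hc12), hFc1, hc2] at hml'
      -- assemble
      have hx2a : (Pr ({ω | T₁ ω ≤ c1} ∩ {ω | T₂ ω ≤ c1})).toReal ≤ a := by
        have hmono := measure_mono (μ := Pr) (Set.inter_subset_right
          (s := {ω | T₁ ω ≤ c1}) (t := {ω | T₂ ω ≤ c1}))
        have := ENNReal.toReal_mono (measure_ne_top _ _) hmono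
        rw [hcdf₂ c1, hFc1] at this
        linarith
      have halg := mdfwer_algebra (a := a)
        (q := 1 - F θ₁ c2)
        (x1 := (Pr ({ω | T₁ ω ≤ c1} ∩ {ω | c2 ≤ T₂ ω})).toReal)
        (x2 := (Pr ({ω | T₁ ω ≤ c1} ∩ {ω | T₂ ω ≤ c1})).toReal)
        (y := (Pr ({ω | T₁ ω ≤ c1} ∩ {ω | c1 ≤ T₂ ω})).toReal)
        ha0 ha1 (by rw [← hX]; exact ENNReal.toReal_nonneg)
        ENNReal.toReal_nonneg ENNReal.toReal_nonneg ENNReal.toReal_nonneg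
        (by nlinarith [hml', hyx]) hPineq hx2a
      calc (Pr _).toReal
          ≤ (Pr ({ω | c2 ≤ T₁ ω} ∪ ({ω | T₁ ω ≤ c1} ∩ {ω | c2 ≤ T₂ ω})
              ∪ ({ω | T₁ ω ≤ c1} ∩ {ω | T₂ ω ≤ c1}))).toReal :=
            ENNReal.toReal_mono (measure_ne_top _ _) (measure_mono hsub)
        _ ≤ (Pr {ω | c2 ≤ T₁ ω}).toReal
            + (Pr ({ω | T₁ ω ≤ c1} ∩ {ω | c2 ≤ T₂ ω})).toReal
            + (Pr ({ω | T₁ ω ≤ c1} ∩ {ω | T₂ ω ≤ c1})).toReal := mdfwer_union3 _ _ _ _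
        _ ≤ 2 * a := by rw [hX]; exact halg
        _ = α := haa
    · -- θ₂ > 0 : easy
      have hsub : {ω | ∃ i : Fin 2,
          (∀ j : Fin 2, j ≤ i →
            2 * min (F 0 ((![T₁, T₂] j) ω)) (1 - F 0 ((![T₁, T₂] j) ω)) ≤ α) ∧
          ((![θ₁, θ₂] i : ℝ) = 0 ∨
            ((![θ₁, θ₂] i : ℝ) ≠ 0 ∧ (![θ₁, θ₂] i : ℝ) * (![T₁, T₂] i) ω < 0))}
          ⊆ {ω | c2 ≤ T₁ ω} ∪ {ω | T₂ ω ≤ c1} := by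
        intro ω hω
        rcases hevent ω hω with ⟨hP, hE⟩ | ⟨_, hP2, hE2⟩
        · rcases hE with hE | ⟨_, hE⟩
          · exact absurd hE (ne_of_lt h1)
          · have hT1pos : 0 < T₁ ω := by nlinarith
            rcases hP with hP | hP
            · linarith
            · exact Or.inl hP
        · rcases hE2 with hE | ⟨_, hE⟩
          · exact absurd hE (ne_of_gt h2)
          · have hT2neg : T₂ ω < 0 := by nlinarith
            rcases hP2 with hP | hP
            · exact Or.inr hP
            · linarith
      calc (Pr _).toReal ≤ (Pr ({ω | c2 ≤ T₁ ω} ∪ {ω | T₂ ω ≤ c1})).toReal :=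
            ENNReal.toReal_mono (measure_ne_top _ _) (measure_mono hsub)
        _ ≤ (Pr {ω | c2 ≤ T₁ ω}).toReal + (Pr {ω | T₂ ω ≤ c1}).toReal := mdfwer_union2 _ _ _
        _ = (1 - F θ₁ c2) + F θ₂ c1 := by rw [hge1 c2, hcdf₂ c1]
        _ ≤ a + a := by
            have hh1 : F 0 c2 ≤ F θ₁ c2 := hstoch θ₁ 0 (le_of_lt h1) c2
            have hh2 : F θ₂ c1 ≤ F 0 c1 := hstoch 0 θ₂ (le_of_lt h2) c1
            rw [hc2] at hh1
            rw [hFc1] at hh2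
            linarith
        _ = α := by linarith [haa]
  · -- θ₁ = 0 : easy
    have hsub : {ω | ∃ i : Fin 2,
        (∀ j : Fin 2, j ≤ i →
          2 * min (F 0 ((![T₁, T₂] j) ω)) (1 - F 0 ((![T₁, T₂] j) ω)) ≤ α) ∧
        ((![θ₁, θ₂] i : ℝ) = 0 ∨
          ((![θ₁, θ₂] i : ℝ) ≠ 0 ∧ (![θ₁, θ₂] i : ℝ) * (![T₁, T₂] i) ω < 0))}
        ⊆ {ω | T₁ ω ≤ c1} ∪ {ω | c2 ≤ T₁ ω} := by
      intro ω hω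
      rcases hevent ω hω with ⟨hP, _⟩ | ⟨hP, _, _⟩ <;>
        · rcases hP with hP | hP
          exacts [Or.inl hP, Or.inr hP]
    calc (Pr _).toReal ≤ (Pr ({ω | T₁ ω ≤ c1} ∪ {ω | c2 ≤ T₁ ω})).toReal :=
          ENNReal.toReal_mono (measure_ne_top _ _) (measure_mono hsub)
      _ ≤ (Pr {ω | T₁ ω ≤ c1}).toReal + (Pr {ω | c2 ≤ T₁ ω}).toReal := mdfwer_union2 _ _ _
      _ = F θ₁ c1 + (1 - F θ₁ c2) := by rw [hcdf₁ c1, hge1 c2]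
      _ = α := by rw [h1, hFc1, hc2]; linarith [haa]
  · -- θ₁ > 0
    rcases lt_trichotomy θ₂ 0 with h2 | h2 | h2
    · -- θ₂ < 0 : easy
      have hsub : {ω | ∃ i : Fin 2,
          (∀ j : Fin 2, j ≤ i →
            2 * min (F 0 ((![T₁, T₂] j) ω)) (1 - F 0 ((![T₁, T₂] j) ω)) ≤ α) ∧
          ((![θ₁, θ₂] i : ℝ) = 0 ∨
            ((![θ₁, θ₂] i : ℝ) ≠ 0 ∧ (![θ₁, θ₂] i : ℝ) * (![T₁, T₂] i) ω < 0))}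
          ⊆ {ω | T₁ ω ≤ c1} ∪ {ω | c2 ≤ T₂ ω} := by
        intro ω hω
        rcases hevent ω hω with ⟨hP, hE⟩ | ⟨_, hP2, hE2⟩
        · rcases hE with hE | ⟨_, hE⟩
          · exact absurd hE (ne_of_gt h1)
          · have hT1neg : T₁ ω < 0 := by nlinarith
            rcases hP with hP | hP
            · exact Or.inl hP
            · linarith
        · rcases hE2 with hE | ⟨_, hE⟩
          · exact absurd hE (ne_of_lt h2)
          · have hT2pos : 0 < T₂ ω := by nlinarith
            rcases hP2 with hP | hP
            · linarith
            · exact Or.inr hP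
      calc (Pr _).toReal ≤ (Pr ({ω | T₁ ω ≤ c1} ∪ {ω | c2 ≤ T₂ ω})).toReal :=
            ENNReal.toReal_mono (measure_ne_top _ _) (measure_mono hsub)
        _ ≤ (Pr {ω | T₁ ω ≤ c1}).toReal + (Pr {ω | c2 ≤ T₂ ω}).toReal := mdfwer_union2 _ _ _
        _ = F θ₁ c1 + (1 - F θ₂ c2) := by rw [hcdf₁ c1, hge2 c2]
        _ ≤ a + a := by
            have hh1 : F θ₁ c1 ≤ F 0 c1 := hstoch 0 θ₁ (le_of_lt h1) c1
            have hh2 : F 0 c2 ≤ F θ₂ c2 := hstoch θ₂ 0 (le_of_lt h2) c2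
            rw [hc2] at hh2
            rw [hFc1] at hh1
            linarith
        _ = α := by linarith [haa]
    · -- θ₂ = 0 : hard case
      subst h2
      have hsub : {ω | ∃ i : Fin 2,
          (∀ j : Fin 2, j ≤ i →
            2 * min (F 0 ((![T₁, T₂] j) ω)) (1 - F 0 ((![T₁, T₂] j) ω)) ≤ α) ∧
          ((![θ₁, (0:ℝ)] i : ℝ) = 0 ∨
            ((![θ₁, (0:ℝ)] i : ℝ) ≠ 0 ∧ (![θ₁, (0:ℝ)] i : ℝ) * (![T₁, T₂] i) ω < 0))}
          ⊆ {ω | T₁ ω ≤ c1} ∪ ({ω | c2 ≤ T₁ ω} ∩ {ω | T₂ ω ≤ c1})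
            ∪ ({ω | c2 ≤ T₁ ω} ∩ {ω | c2 ≤ T₂ ω}) := by
        intro ω hω
        rcases hevent ω hω with ⟨hP, hE⟩ | ⟨hP1, hP2, _⟩
        · rcases hE with hE | ⟨_, hE⟩
          · exact absurd hE (ne_of_gt h1)
          · have hT1neg : T₁ ω < 0 := by nlinarith
            rcases hP with hP | hP
            · exact Or.inl (Or.inl hP)
            · exact absurd hP (by intro h; linarith)
        · rcases hP1 with hP | hP
          · exact Or.inl (Or.inl hP)
          · rcases hP2 with hQ | hQ
            · exact Or.inl (Or.inr ⟨hP, hQ⟩)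
            · exact Or.inr ⟨hP, hQ⟩
      -- probabilities
      have hX : (Pr {ω | T₁ ω ≤ c1}).toReal = F θ₁ c1 := hcdf₁ c1
      have hsplit0 := mdfwer_split Pr {ω | c2 ≤ T₁ ω} (B := {ω | T₂ ω < c2})
        (hT₂ measurableSet_Iio)
      have hcompl : {ω | T₂ ω < c2}ᶜ = {ω | c2 ≤ T₂ ω} := by
        ext ω; simp [not_lt]
      rw [hcompl] at hsplit0
      have hA : (Pr {ω | c2 ≤ T₁ ω}).toReal = 1 - F θ₁ c2 := hge1 c2
      -- PRDS step
      have hne1 : Pr {ω | T₂ ω < c1} ≠ 0 := by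
        intro h0
        have h := hlt2 c1
        rw [h0, ENNReal.toReal_zero, hFc1] at h
        linarith
      have hne2 : Pr {ω | T₂ ω < c2} ≠ 0 := by
        intro h0
        have h := hlt2 c2
        rw [h0, ENNReal.toReal_zero, hc2] at h
        linarith
      have hφm : Measurable (fun x : ℝ => if c2 ≤ x then (1:ℝ) else 0) :=
        Measurable.ite measurableSet_Ici measurable_const measurable_const
      have hφmono : Monotone (fun x : ℝ => if c2 ≤ x then (1:ℝ) else 0) := by
        intro s t hst
        dsimp only
        split_ifs with hs ht
        · exact le_rfl
        · exact absurd (hs.trans hst) ht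
        · exact zero_le_one
        · exact le_rfl
      have hφbd : ∃ C, ∀ x : ℝ, |(fun x : ℝ => if c2 ≤ x then (1:ℝ) else 0) x| ≤ C := by
        refine ⟨1, fun x => ?_⟩
        dsimp only
        split_ifs <;> simp
      have hPR := (hPRDS _ hφm hφmono hφbd c1 c2 (le_of_lt hc12)).2 hne1 hne2
      have hint1 : (∫ ω in {ω | T₂ ω < c1}, (if c2 ≤ T₁ ω then (1:ℝ) else 0) ∂Pr)
          = (Pr ({ω | T₂ ω < c1} ∩ {ω | c2 ≤ T₁ ω})).toReal :=
        mdfwer_setIntegral_ind Pr (hT₁ measurableSet_Ici) _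
          (fun ω hω => if_pos hω) (fun ω hω => if_neg hω)
      have hint2 : (∫ ω in {ω | T₂ ω < c2}, (if c2 ≤ T₁ ω then (1:ℝ) else 0) ∂Pr)
          = (Pr ({ω | T₂ ω < c2} ∩ {ω | c2 ≤ T₁ ω})).toReal :=
        mdfwer_setIntegral_ind Pr (hT₁ measurableSet_Ici) _
          (fun ω hω => if_pos hω) (fun ω hω => if_neg hω)
      rw [hint1, hint2, hlt2 c1, hlt2 c2, hFc1, hc2] at hPR
      rw [div_le_div_iff₀ ha0 h1a] at hPR
      have hPineq : (Pr ({ω | c2 ≤ T₁ ω} ∩ {ω | T₂ ω ≤ c1})).toReal * (1 - a)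
          ≤ a * (Pr ({ω | c2 ≤ T₁ ω} ∩ {ω | T₂ ω < c2})).toReal := by
        rw [mdfwer_inter_le_lt Pr T₂ hsing2 _ c1, Set.inter_comm]
        rw [Set.inter_comm {ω | c2 ≤ T₁ ω} {ω | T₂ ω < c2}]
        linarith [hPR]
      -- MLR step
      have hpt : ∀ x ∈ Set.Iic c1, ∀ y ∈ Set.Ioc c1 c2,
          ENNReal.ofReal (f θ₁ x) * ENNReal.ofReal (f 0 y)
            ≤ ENNReal.ofReal (f θ₁ y) * ENNReal.ofReal (f 0 x) := by
        intro x hx y hy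
        have hxy : x < y := lt_of_le_of_lt (hx : x ≤ c1) hy.1
        have h := hMLR 0 θ₁ h1 x y hxy
        calc ENNReal.ofReal (f θ₁ x) * ENNReal.ofReal (f 0 y)
            = ENNReal.ofReal (f θ₁ x * f 0 y) := (ENNReal.ofReal_mul (hf_nonneg θ₁ x)).symm
          _ ≤ ENNReal.ofReal (f θ₁ y * f 0 x) := ENNReal.ofReal_le_ofReal h
          _ = ENNReal.ofReal (f θ₁ y) * ENNReal.ofReal (f 0 x) :=
              ENNReal.ofReal_mul (hf_nonneg θ₁ y)
      have hml := mdfwer_lintegral_mlr_swap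
        (u := fun t => ENNReal.ofReal (f θ₁ t)) (v := fun t => ENNReal.ofReal (f 0 t))
        (ENNReal.measurable_ofReal.comp (hf_meas θ₁))
        (ENNReal.measurable_ofReal.comp (hf_meas 0))
        (I := Set.Iic c1) (J := Set.Ioc c1 c2) hpt
      rw [hL1 _ measurableSet_Iic, hL1 _ measurableSet_Ioc,
        hL2 _ measurableSet_Iic, hL2 _ measurableSet_Ioc] at hml
      have hml' := ENNReal.toReal_mono
        (ENNReal.mul_ne_top (measure_ne_top _ _) (measure_ne_top _ _)) hml
      rw [ENNReal.toReal_mul, ENNReal.toReal_mul] at hml'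
      have hpre1 : T₁ ⁻¹' Set.Iic c1 = {ω | T₁ ω ≤ c1} := rfl
      have hpre2 : T₁ ⁻¹' Set.Ioc c1 c2 = {ω | c1 < T₁ ω ∧ T₁ ω ≤ c2} := rfl
      have hpre3 : T₂ ⁻¹' Set.Iic c1 = {ω | T₂ ω ≤ c1} := rfl
      have hpre4 : T₂ ⁻¹' Set.Ioc c1 c2 = {ω | c1 < T₂ ω ∧ T₂ ω ≤ c2} := rfl
      rw [hpre1, hpre2, hpre3, hpre4, hcdf₁ c1, hcdf₂ c1,
        mdfwer_Ioc_toReal Pr T₁ hT₁ hcdf₁ (le_of_lt hc12),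
        mdfwer_Ioc_toReal Pr T₂ hT₂ hcdf₂ (le_of_lt hc12), hFc1, hc2] at hml'
      -- assemble
      have hx2a : (Pr ({ω | c2 ≤ T₁ ω} ∩ {ω | c2 ≤ T₂ ω})).toReal ≤ a := by
        have hmono := measure_mono (μ := Pr) (Set.inter_subset_right
          (s := {ω | c2 ≤ T₁ ω}) (t := {ω | c2 ≤ T₂ ω}))
        have := ENNReal.toReal_mono (measure_ne_top _ _) hmono
        rw [hge2 c2, hc2] at this
        linarith
      have halg := mdfwer_algebra (a := a)
        (q := F θ₁ c1)
        (x1 := (Pr ({ω | c2 ≤ T₁ ω} ∩ {ω | T₂ ω ≤ c1})).toReal)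
        (x2 := (Pr ({ω | c2 ≤ T₁ ω} ∩ {ω | c2 ≤ T₂ ω})).toReal)
        (y := (Pr ({ω | c2 ≤ T₁ ω} ∩ {ω | T₂ ω < c2})).toReal)
        ha0 ha1 (by rw [← hX]; exact ENNReal.toReal_nonneg)
        ENNReal.toReal_nonneg ENNReal.toReal_nonneg ENNReal.toReal_nonneg
        (by nlinarith [hml', hsplit0, hA]) hPineq hx2a
      calc (Pr _).toReal
          ≤ (Pr ({ω | T₁ ω ≤ c1} ∪ ({ω | c2 ≤ T₁ ω} ∩ {ω | T₂ ω ≤ c1})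
              ∪ ({ω | c2 ≤ T₁ ω} ∩ {ω | c2 ≤ T₂ ω}))).toReal :=
            ENNReal.toReal_mono (measure_ne_top _ _) (measure_mono hsub)
        _ ≤ (Pr {ω | T₁ ω ≤ c1}).toReal
            + (Pr ({ω | c2 ≤ T₁ ω} ∩ {ω | T₂ ω ≤ c1})).toReal
            + (Pr ({ω | c2 ≤ T₁ ω} ∩ {ω | c2 ≤ T₂ ω})).toReal := mdfwer_union3 _ _ _ _
        _ ≤ 2 * a := by rw [hX]; exact halg
        _ = α := haa
    · -- θ₂ > 0 : easy
      have hsub : {ω | ∃ i : Fin 2,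
          (∀ j : Fin 2, j ≤ i →
            2 * min (F 0 ((![T₁, T₂] j) ω)) (1 - F 0 ((![T₁, T₂] j) ω)) ≤ α) ∧
          ((![θ₁, θ₂] i : ℝ) = 0 ∨
            ((![θ₁, θ₂] i : ℝ) ≠ 0 ∧ (![θ₁, θ₂] i : ℝ) * (![T₁, T₂] i) ω < 0))}
          ⊆ {ω | T₁ ω ≤ c1} ∪ {ω | T₂ ω ≤ c1} := by
        intro ω hω
        rcases hevent ω hω with ⟨hP, hE⟩ | ⟨_, hP2, hE2⟩
        · rcases hE with hE | ⟨_, hE⟩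
          · exact absurd hE (ne_of_gt h1)
          · have hT1neg : T₁ ω < 0 := by nlinarith
            rcases hP with hP | hP
            · exact Or.inl hP
            · linarith
        · rcases hE2 with hE | ⟨_, hE⟩
          · exact absurd hE (ne_of_gt h2)
          · have hT2neg : T₂ ω < 0 := by nlinarith
            rcases hP2 with hP | hP
            · exact Or.inr hP
            · linarith
      calc (Pr _).toReal ≤ (Pr ({ω | T₁ ω ≤ c1} ∪ {ω | T₂ ω ≤ c1})).toReal :=
            ENNReal.toReal_mono (measure_ne_top _ _) (measure_mono hsub)
        _ ≤ (Pr {ω | T₁ ω ≤ c1}).toReal + (Pr {ω | T₂ ω ≤ c1}).toReal := mdfwer_union2 _ _ _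
        _ = F θ₁ c1 + F θ₂ c1 := by rw [hcdf₁ c1, hcdf₂ c1]
        _ ≤ a + a := by
            have hh1 : F θ₁ c1 ≤ F 0 c1 := hstoch 0 θ₁ (le_of_lt h1) c1
            have hh2 : F θ₂ c1 ≤ F 0 c1 := hstoch 0 θ₂ (le_of_lt h2) c1
            rw [hFc1] at hh1 hh2
            linarith
        _ = α := by linarith [haa]
end

section
/- Suppose the family {F_θ} satisfies the MLR assumption (Assumption 2), the signed false-null statistics are positively regression dependent (Assumption 3), Assumption 5 holds, and the multivariate monotone likelihood ratio condition (Assumption 7, MMLR) holds. Then Procedure 2 (the directional fixed sequence procedure with constant critical value α at every step) satisfies mdFWER ≤ α for every n and every configuration of parameters θ_1,…,θ_n ∈ ℝ. -/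
open MeasureTheory Set

/-- lintegral over an increasing union of sets equals the sup of the set lintegrals. -/
lemma aux_lintegral_iUnion_sup {γ : Type*} [MeasurableSpace γ] {ν : Measure γ}
    {s : ℕ → Set γ} (hs : ∀ k, MeasurableSet (s k)) (hmono : Monotone s)
    {g : γ → ENNReal} (hg : Measurable g) :
    ∫⁻ t in ⋃ k, s k, g t ∂ν = ⨆ k, ∫⁻ t in s k, g t ∂ν := by
  have h1 : ∀ k, ∫⁻ t in s k, g t ∂ν = ∫⁻ t, (s k).indicator g t ∂ν := by
    intro k; rw [lintegral_indicator (hs k)]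
  have h2 : ∫⁻ t in ⋃ k, s k, g t ∂ν = ∫⁻ t, (⋃ k, s k).indicator g t ∂ν := by
    rw [lintegral_indicator (MeasurableSet.iUnion hs)]
  rw [h2]
  have h3 : ∀ t, (⋃ k, s k).indicator g t = ⨆ k, (s k).indicator g t := by
    intro t
    by_cases ht : t ∈ ⋃ k, s k
    · obtain ⟨k0, hk0⟩ := mem_iUnion.1 ht
      rw [indicator_of_mem ht]
      apply le_antisymm
      · exact le_iSup_of_le k0 (by rw [indicator_of_mem hk0])
      · exact iSup_le fun k => by
          by_cases h : t ∈ s k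
          · rw [indicator_of_mem h]
          · rw [indicator_of_notMem h]; exact bot_le
    · rw [indicator_of_notMem ht]
      have : ∀ k, (s k).indicator g t = 0 := fun k =>
        indicator_of_notMem (fun h => ht (mem_iUnion.2 ⟨k, h⟩)) g
      simp [this]
  calc ∫⁻ t, (⋃ k, s k).indicator g t ∂ν = ∫⁻ t, ⨆ k, (s k).indicator g t ∂ν := by
        congr 1; ext t; exact h3 t
    _ = ⨆ k, ∫⁻ t, (s k).indicator g t ∂ν := by
        refine lintegral_iSup (fun k => (hg.indicator (hs k))) ?_
        intro a b hab t
        simp only []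
        by_cases h : t ∈ s a
        · rw [indicator_of_mem h, indicator_of_mem (hmono hab h)]
        · rw [indicator_of_notMem h]; exact bot_le
    _ = ⨆ k, ∫⁻ t in s k, g t ∂ν := by simp_rw [h1]

/-- A nonneg measurable function whose set integrals are all ≤ 1 is integrable
(w.r.t. a finite measure). -/
lemma aux_integrable_of_setIntegral {γ : Type*} [MeasurableSpace γ] {ν : Measure γ}
    [IsFiniteMeasure ν] {k : γ → ℝ} (hm : Measurable k) (h0 : ∀ t, 0 ≤ k t)
    (hb : ∀ A, MeasurableSet A → ∫ t in A, k t ∂ν ≤ 1) : Integrable k ν := by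
  have hAj : ∀ j : ℕ, MeasurableSet {t | k t ≤ (j:ℝ)} := fun j =>
    measurableSet_le hm measurable_const
  have hint : ∀ j : ℕ, IntegrableOn k {t | k t ≤ (j:ℝ)} ν := by
    intro j
    refine Measure.integrableOn_of_bounded (measure_ne_top ν _)
      hm.aestronglyMeasurable (M := (j:ℝ)) ?_
    refine (ae_restrict_iff' (hAj j)).2 (ae_of_all _ fun t ht => ?_)
    rw [Real.norm_eq_abs, abs_of_nonneg (h0 t)]; exact ht
  have hlim : ∫⁻ t, ENNReal.ofReal (k t) ∂ν ≤ 1 := by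
    have hcover : (⋃ j : ℕ, {t | k t ≤ (j:ℝ)}) = univ := by
      ext t; simp only [mem_iUnion, mem_univ, iff_true, mem_setOf_eq]
      obtain ⟨j, hj⟩ := exists_nat_ge (k t); exact ⟨j, hj⟩
    have hsm : Monotone (fun j : ℕ => {t | k t ≤ (j:ℝ)}) := by
      intro a b hab t ht
      simp only [mem_setOf_eq] at ht ⊢
      exact le_trans ht (by exact_mod_cast hab)
    have := aux_lintegral_iUnion_sup (ν := ν) hAj hsm
      (g := fun t => ENNReal.ofReal (k t)) (hm.ennreal_ofReal)
    rw [hcover] at this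
    rw [← setLIntegral_univ, this]
    refine iSup_le fun j => ?_
    rw [← ofReal_integral_eq_lintegral_ofReal (hint j)
      ((ae_restrict_iff' (hAj j)).2 (ae_of_all _ fun t _ => h0 t))]
    exact ENNReal.ofReal_le_one.2 (hb _ (hAj j))
  refine ⟨hm.aestronglyMeasurable, ?_⟩
  rw [hasFiniteIntegral_iff_norm]
  calc ∫⁻ t, ENNReal.ofReal ‖k t‖ ∂ν = ∫⁻ t, ENNReal.ofReal (k t) ∂ν := by
        congr 1; ext t; rw [Real.norm_eq_abs, abs_of_nonneg (h0 t)]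
    _ ≤ 1 := hlim
    _ < ⊤ := by norm_num

/-- The basic likelihood-ratio cross inequality. -/
lemma aux_cross {u v : ℝ → ℝ} {L H : Set ℝ}
    (hLm : MeasurableSet L) (hHm : MeasurableSet H)
    (hlr : ∀ x ∈ L, ∀ y ∈ H, u x * v y ≤ v x * u y)
    (huL : IntegrableOn u L) (hvL : IntegrableOn v L)
    (huH : IntegrableOn u H) (hvH : IntegrableOn v H) :
    (∫ x in L, u x) * (∫ y in H, v y) ≤ (∫ x in L, v x) * (∫ y in H, u y) := by
  have inner : ∀ x ∈ L, u x * ∫ y in H, v y ≤ v x * ∫ y in H, u y := by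
    intro x hx
    rw [← integral_const_mul, ← integral_const_mul]
    exact setIntegral_mono_on (hvH.const_mul _) (huH.const_mul _) hHm
      (fun y hy => hlr x hx y hy)
  calc (∫ x in L, u x) * (∫ y in H, v y) = ∫ x in L, u x * ∫ y in H, v y := by
        rw [integral_mul_const]
    _ ≤ ∫ x in L, v x * ∫ y in H, u y :=
        setIntegral_mono_on (huL.mul_const _) (hvL.mul_const _) hLm inner
    _ = (∫ x in L, v x) * (∫ y in H, u y) := by rw [integral_mul_const]

/-- Any "conditional density" as in the MMLR assumption is a.e. integrable. -/
lemma aux_ae_integrable {Ω γ : Type*} [MeasurableSpace Ω] [MeasurableSpace γ]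
    (Pr : Measure Ω) [IsProbabilityMeasure Pr]
    {g : Ω → γ} (hg : Measurable g) {h : Ω → ℝ} (_hh : Measurable h)
    {p : γ → ℝ → ℝ} (hpm : Measurable (fun pr : γ × ℝ => p pr.1 pr.2))
    (hp0 : ∀ t x, 0 ≤ p t x)
    (heq : ∀ A : Set γ, MeasurableSet A → ∀ B : Set ℝ, MeasurableSet B →
      (Pr {ω | g ω ∈ A ∧ h ω ∈ B}).toReal = ∫ t in A, (∫ x in B, p t x) ∂(Pr.map g)) :
    ∀ᵐ t ∂(Pr.map g), Integrable (p t) volume := by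
  set μ := Pr.map g with hμ
  haveI : IsProbabilityMeasure μ := Measure.isProbabilityMeasure_map hg.aemeasurable
  have hpsm : StronglyMeasurable (Function.uncurry p) := by
    have : Function.uncurry p = fun pr : γ × ℝ => p pr.1 pr.2 := rfl
    rw [this]; exact hpm.stronglyMeasurable
  have hptm : ∀ t, Measurable (p t) := fun t =>
    hpm.comp (measurable_const.prodMk measurable_id)
  -- the sets of non-integrability on Iic K
  have hEKmeas : ∀ K : ℕ, MeasurableSet {t | ¬ IntegrableOn (p t) (Set.Iic (K:ℝ)) volume} := by
    intro K
    have := measurableSet_integrable (μ := volume.restrict (Set.Iic (K:ℝ))) hpsm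
    exact this.compl
  have hEK0 : ∀ K : ℕ, μ {t | ¬ IntegrableOn (p t) (Set.Iic (K:ℝ)) volume} = 0 := by
    intro K
    set E := {t | ¬ IntegrableOn (p t) (Set.Iic (K:ℝ)) volume} with hE
    have hnull : ∀ K' : ℕ, Pr {ω | g ω ∈ E ∧ h ω ∈ Set.Iic ((K:ℝ) + K')} = 0 := by
      intro K'
      have h1 : (Pr {ω | g ω ∈ E ∧ h ω ∈ Set.Iic ((K:ℝ) + K')}).toReal
          = ∫ t in E, (∫ x in Set.Iic ((K:ℝ) + K'), p t x) ∂μ :=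
        heq E (hEKmeas K) _ measurableSet_Iic
      have h2 : ∫ t in E, (∫ x in Set.Iic ((K:ℝ) + K'), p t x) ∂μ = 0 := by
        have : ∀ t ∈ E, (∫ x in Set.Iic ((K:ℝ) + K'), p t x) = (0:ℝ) := by
          intro t ht
          have hni : ¬ IntegrableOn (p t) (Set.Iic ((K:ℝ) + K')) volume := by
            intro hint
            exact ht (hint.mono_set (Set.Iic_subset_Iic.2 (le_add_of_nonneg_right (Nat.cast_nonneg _))))
          exact integral_undef hni
        calc ∫ t in E, (∫ x in Set.Iic ((K:ℝ) + K'), p t x) ∂μ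
            = ∫ t in E, (0:ℝ) ∂μ := setIntegral_congr_fun (hEKmeas K) this
          _ = 0 := integral_zero _ _
      have := h1.trans h2
      rcases (ENNReal.toReal_eq_zero_iff _).1 this with h | h
      · exact h
      · exact absurd h (measure_ne_top Pr _)
    have hcover : {ω | g ω ∈ E} = ⋃ K' : ℕ, {ω | g ω ∈ E ∧ h ω ∈ Set.Iic ((K:ℝ) + K')} := by
      ext ω
      simp only [Set.mem_setOf_eq, Set.mem_iUnion, Set.mem_Iic]
      constructor
      · intro hω
        obtain ⟨K', hK'⟩ := exists_nat_ge (h ω - K)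
        exact ⟨K', hω, by linarith⟩
      · rintro ⟨K', hK', _⟩; exact hK'
    have : Pr {ω | g ω ∈ E} = 0 := by
      rw [hcover]; exact measure_iUnion_null hnull
    rw [hμ, Measure.map_apply hg (hEKmeas K)]
    exact this
  -- the tail set
  set Einf := {t | (∀ K : ℕ, IntegrableOn (p t) (Set.Iic (K:ℝ)) volume)
      ∧ ¬ Integrable (p t) volume} with hEinf
  have hEinfmeas : MeasurableSet Einf := by
    have h1 : MeasurableSet {t | ∀ K : ℕ, IntegrableOn (p t) (Set.Iic (K:ℝ)) volume} := by
      have : {t | ∀ K : ℕ, IntegrableOn (p t) (Set.Iic (K:ℝ)) volume}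
          = ⋂ K : ℕ, {t | ¬ IntegrableOn (p t) (Set.Iic (K:ℝ)) volume}ᶜ := by
        ext t; simp [Set.mem_iInter]
      rw [this]; exact MeasurableSet.iInter fun K => (hEKmeas K).compl
    have h2 : MeasurableSet {t | Integrable (p t) volume} :=
      measurableSet_integrable (μ := volume) hpsm
    exact h1.inter h2.compl
  have hEinf0 : μ Einf = 0 := by
    set FK : ℕ → γ → ℝ := fun K t => ∫ x in Set.Iic (K:ℝ), p t x with hFK
    have hFKmeas : ∀ K : ℕ, Measurable (FK K) := by
      intro K
      have := hpsm.integral_prod_right (ν := volume.restrict (Set.Iic (K:ℝ)))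
      exact this.measurable
    have hFK0 : ∀ K t, 0 ≤ FK K t := fun K t =>
      setIntegral_nonneg measurableSet_Iic (fun x _ => hp0 t x)
    have hFKb : ∀ K : ℕ, ∀ A : Set γ, MeasurableSet A → ∫ t in A, FK K t ∂μ ≤ 1 := by
      intro K A hA
      rw [← heq A hA _ measurableSet_Iic]
      exact ENNReal.toReal_le_of_le_ofReal zero_le_one (by simpa using MeasureTheory.prob_le_one (μ := Pr))
    have hFKint : ∀ K : ℕ, Integrable (FK K) μ := fun K =>
      aux_integrable_of_setIntegral (hFKmeas K) (hFK0 K) (hFKb K)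
    have hbound : ∀ K : ℕ, ∫⁻ t in Einf, ENNReal.ofReal (FK K t) ∂μ ≤ 1 := by
      intro K
      rw [← ofReal_integral_eq_lintegral_ofReal ((hFKint K).integrableOn)
        (ae_of_all _ fun t => hFK0 K t)]
      exact ENNReal.ofReal_le_one.2 (by
        calc ∫ t in Einf, FK K t ∂μ ≤ 1 := hFKb K Einf hEinfmeas)
    have hsup : ∫⁻ t in Einf, ⨆ K : ℕ, ENNReal.ofReal (FK K t) ∂μ
        = ⨆ K : ℕ, ∫⁻ t in Einf, ENNReal.ofReal (FK K t) ∂μ := by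
      refine lintegral_iSup' (fun K => ((hFKmeas K).ennreal_ofReal).aemeasurable) ?_
      refine (ae_restrict_iff' hEinfmeas).2 (ae_of_all _ fun t ht => ?_)
      intro a b hab
      refine ENNReal.ofReal_le_ofReal ?_
      refine setIntegral_mono_set (ht.1 b) ?_ ?_
      · exact (ae_restrict_iff' measurableSet_Iic).2 (ae_of_all _ fun x _ => hp0 t x)
      · exact HasSubset.Subset.eventuallyLE (Set.Iic_subset_Iic.2 (by exact_mod_cast hab))
    have hinfty : ∀ t ∈ Einf, (⨆ K : ℕ, ENNReal.ofReal (FK K t)) = ⊤ := by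
      intro t ht
      have hlint : ∫⁻ x, ENNReal.ofReal (p t x) = ⊤ := by
        by_contra hne
        refine ht.2 ?_
        refine ⟨(hptm t).aestronglyMeasurable, ?_⟩
        rw [hasFiniteIntegral_iff_norm]
        have : ∀ x, ENNReal.ofReal ‖p t x‖ = ENNReal.ofReal (p t x) := by
          intro x; rw [Real.norm_eq_abs, abs_of_nonneg (hp0 t x)]
        simp_rw [this]
        exact lt_top_iff_ne_top.2 hne
      have hcover : (⋃ K : ℕ, Set.Iic (K:ℝ)) = Set.univ := by
        ext x; simp only [Set.mem_iUnion, Set.mem_univ, iff_true, Set.mem_Iic]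
        obtain ⟨K, hK⟩ := exists_nat_ge x; exact ⟨K, hK⟩
      have hmono : Monotone (fun K : ℕ => Set.Iic ((K:ℝ))) := by
        intro a b hab; exact Set.Iic_subset_Iic.2 (by exact_mod_cast hab)
      have := aux_lintegral_iUnion_sup (ν := volume) (fun K => measurableSet_Iic)
        hmono (g := fun x => ENNReal.ofReal (p t x)) ((hptm t).ennreal_ofReal)
      rw [hcover, setLIntegral_univ] at this
      have heach : ∀ K : ℕ, ∫⁻ x in Set.Iic ((K:ℝ)), ENNReal.ofReal (p t x)
          = ENNReal.ofReal (FK K t) := by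
        intro K
        rw [← ofReal_integral_eq_lintegral_ofReal (ht.1 K)
          ((ae_restrict_iff' measurableSet_Iic).2 (ae_of_all _ fun x _ => hp0 t x))]
      rw [hlint] at this
      rw [show (⨆ K : ℕ, ENNReal.ofReal (FK K t))
          = ⨆ k : ℕ, ∫⁻ (x : ℝ) in Set.Iic (k:ℝ), ENNReal.ofReal (p t x)
        from iSup_congr fun K => (heach K).symm]
      exact this.symm
    have : (⊤:ENNReal) * μ Einf ≤ 1 := by
      have h1 : ∫⁻ t in Einf, ⨆ K : ℕ, ENNReal.ofReal (FK K t) ∂μ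
          = ∫⁻ _ in Einf, (⊤:ENNReal) ∂μ := by
        refine setLIntegral_congr_fun_ae hEinfmeas (ae_of_all _ fun t ht => hinfty t ht)
      rw [hsup] at h1
      rw [setLIntegral_const] at h1
      rw [← h1]
      exact iSup_le hbound
    by_contra hne
    have : (⊤:ENNReal) * μ Einf = ⊤ := ENNReal.top_mul hne
    rw [this] at *
    simp_all
  -- combine
  have h1 : ∀ᵐ t ∂μ, ∀ K : ℕ, IntegrableOn (p t) (Set.Iic (K:ℝ)) volume := by
    rw [ae_all_iff]
    intro K
    exact (ae_iff.2 (by simpa using hEK0 K))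
  have h2 : ∀ᵐ t ∂μ, t ∉ Einf := (ae_iff.2 (by simpa [hEinf] using hEinf0))
  filter_upwards [h1, h2] with t hK hE
  by_contra hni
  exact hE ⟨hK, hni⟩

/-- Marginal stochastic dominance from an a.e. conditional likelihood-ratio order. -/
lemma aux_dominance {Ω γ : Type*} [MeasurableSpace Ω] [MeasurableSpace γ]
    (Pr : Measure Ω) [IsProbabilityMeasure Pr]
    {g : Ω → γ} (hg : Measurable g) {h1 h2 : Ω → ℝ}
    (hh1 : Measurable h1) (hh2 : Measurable h2)
    {p q : γ → ℝ → ℝ}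
    (hpm : Measurable (fun pr : γ × ℝ => p pr.1 pr.2))
    (hqm : Measurable (fun pr : γ × ℝ => q pr.1 pr.2))
    (hp0 : ∀ t x, 0 ≤ p t x) (hq0 : ∀ t x, 0 ≤ q t x)
    (heqp : ∀ A : Set γ, MeasurableSet A → ∀ B : Set ℝ, MeasurableSet B →
      (Pr {ω | g ω ∈ A ∧ h1 ω ∈ B}).toReal = ∫ t in A, (∫ x in B, p t x) ∂(Pr.map g))
    (heqq : ∀ A : Set γ, MeasurableSet A → ∀ B : Set ℝ, MeasurableSet B →
      (Pr {ω | g ω ∈ A ∧ h2 ω ∈ B}).toReal = ∫ t in A, (∫ x in B, q t x) ∂(Pr.map g))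
    (hlr : ∀ᵐ t ∂(Pr.map g), ∀ x₁ x₂ : ℝ, x₁ < x₂ → p t x₁ * q t x₂ ≤ p t x₂ * q t x₁)
    (c : ℝ) :
    (Pr {ω | h1 ω ≤ c}).toReal ≤ (Pr {ω | h2 ω ≤ c}).toReal := by
  set μ := Pr.map g with hμdef
  haveI : IsProbabilityMeasure μ := Measure.isProbabilityMeasure_map hg.aemeasurable
  set Fp : γ → ℝ := fun t => ∫ x in Set.Iic c, p t x with hFp
  set Fq : γ → ℝ := fun t => ∫ x in Set.Iic c, q t x with hFq
  set Pgt : γ → ℝ := fun t => ∫ x in Set.Ioi c, p t x with hPgt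
  set Qgt : γ → ℝ := fun t => ∫ x in Set.Ioi c, q t x with hQgt
  have hpsm : StronglyMeasurable (Function.uncurry p) := hpm.stronglyMeasurable
  have hqsm : StronglyMeasurable (Function.uncurry q) := hqm.stronglyMeasurable
  have hFpm : Measurable Fp :=
    (hpsm.integral_prod_right (ν := volume.restrict (Set.Iic c))).measurable
  have hFqm : Measurable Fq :=
    (hqsm.integral_prod_right (ν := volume.restrict (Set.Iic c))).measurable
  have hPgtm : Measurable Pgt :=
    (hpsm.integral_prod_right (ν := volume.restrict (Set.Ioi c))).measurable
  have hQgtm : Measurable Qgt :=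
    (hqsm.integral_prod_right (ν := volume.restrict (Set.Ioi c))).measurable
  have hFp0 : ∀ t, 0 ≤ Fp t := fun t => setIntegral_nonneg measurableSet_Iic fun x _ => hp0 t x
  have hFq0 : ∀ t, 0 ≤ Fq t := fun t => setIntegral_nonneg measurableSet_Iic fun x _ => hq0 t x
  have hPgt0 : ∀ t, 0 ≤ Pgt t := fun t => setIntegral_nonneg measurableSet_Ioi fun x _ => hp0 t x
  have hQgt0 : ∀ t, 0 ≤ Qgt t := fun t => setIntegral_nonneg measurableSet_Ioi fun x _ => hq0 t x
  have hprb : ∀ s : Set Ω, (Pr s).toReal ≤ 1 :=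
    fun s => ENNReal.toReal_le_of_le_ofReal zero_le_one (by simpa using prob_le_one (μ := Pr))
  have hFpi : Integrable Fp μ := aux_integrable_of_setIntegral hFpm hFp0
    (fun A hA => by rw [← heqp A hA _ measurableSet_Iic]; exact hprb _)
  have hFqi : Integrable Fq μ := aux_integrable_of_setIntegral hFqm hFq0
    (fun A hA => by rw [← heqq A hA _ measurableSet_Iic]; exact hprb _)
  have hPgti : Integrable Pgt μ := aux_integrable_of_setIntegral hPgtm hPgt0
    (fun A hA => by rw [← heqp A hA _ measurableSet_Ioi]; exact hprb _)
  have hQgti : Integrable Qgt μ := aux_integrable_of_setIntegral hQgtm hQgt0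
    (fun A hA => by rw [← heqq A hA _ measurableSet_Ioi]; exact hprb _)
  -- the additivity identity
  have hid : ∀ A : Set γ, MeasurableSet A → ∀ (h' : Ω → ℝ), Measurable h' →
      ∀ (r s : γ → ℝ),
      (∀ A : Set γ, MeasurableSet A →
        (Pr {ω | g ω ∈ A ∧ h' ω ∈ Set.Iic c}).toReal = ∫ t in A, r t ∂μ) →
      (∀ A : Set γ, MeasurableSet A →
        (Pr {ω | g ω ∈ A ∧ h' ω ∈ Set.Ioi c}).toReal = ∫ t in A, s t ∂μ) →
      (∫ t in A, r t ∂μ) + (∫ t in A, s t ∂μ) = (μ A).toReal := by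
    intro A hA h' hh' r s hr hs
    rw [← hr A hA, ← hs A hA]
    have hdisj : Disjoint {ω | g ω ∈ A ∧ h' ω ∈ Set.Iic c} {ω | g ω ∈ A ∧ h' ω ∈ Set.Ioi c} := by
      rw [Set.disjoint_left]
      rintro ω ⟨-, h1'⟩ ⟨-, h2'⟩
      exact absurd (show h' ω ≤ c from h1') (not_le.2 h2')
    have hun : {ω | g ω ∈ A ∧ h' ω ∈ Set.Iic c} ∪ {ω | g ω ∈ A ∧ h' ω ∈ Set.Ioi c}
        = {ω | g ω ∈ A} := by
      ext ω
      simp only [Set.mem_union, Set.mem_setOf_eq, Set.mem_Iic, Set.mem_Ioi]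
      constructor
      · rintro (⟨ha, -⟩ | ⟨ha, -⟩) <;> exact ha
      · intro ha
        rcases le_or_gt (h' ω) c with hc | hc
        · exact Or.inl ⟨ha, hc⟩
        · exact Or.inr ⟨ha, hc⟩
    have hm1 : MeasurableSet {ω | g ω ∈ A ∧ h' ω ∈ Set.Iic c} :=
      (hg hA).inter (hh' measurableSet_Iic)
    have hm2 : MeasurableSet {ω | g ω ∈ A ∧ h' ω ∈ Set.Ioi c} :=
      (hg hA).inter (hh' measurableSet_Ioi)
    have := measure_union (μ := Pr) hdisj hm2
    rw [hun] at this
    have hmap : μ A = Pr {ω | g ω ∈ A} := Measure.map_apply hg hA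
    rw [hmap, this, ENNReal.toReal_add (measure_ne_top Pr _) (measure_ne_top Pr _)]
  -- the pointwise comparison on Astar
  set Astar := {t | Fq t < Fp t} with hAstar
  have hAstarm : MeasurableSet Astar := measurableSet_lt hFqm hFpm
  have hae : ∀ᵐ t ∂μ, t ∈ Astar → Qgt t ≤ Pgt t := by
    have hip := aux_ae_integrable Pr hg hh1 hpm hp0 heqp
    have hiq := aux_ae_integrable Pr hg hh2 hqm hq0 heqq
    filter_upwards [hip, hiq, hlr] with t hpint hqint hlrt htA
    have hcross : Fp t * Qgt t ≤ Fq t * Pgt t := by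
      refine aux_cross measurableSet_Iic measurableSet_Ioi ?_
        hpint.integrableOn hqint.integrableOn hpint.integrableOn hqint.integrableOn
      intro x hx y hy
      have hxy : x < y := lt_of_le_of_lt hx hy
      calc p t x * q t y ≤ p t y * q t x := hlrt x y hxy
        _ = q t x * p t y := mul_comm _ _
    have hlt : Fq t < Fp t := htA
    by_contra hcon
    push_neg at hcon
    have h1' : Fq t * Pgt t ≤ Fp t * Pgt t := by
      exact mul_le_mul_of_nonneg_right hlt.le (hPgt0 t)
    have h2' : Fp t * Pgt t < Fp t * Qgt t := by
      refine mul_lt_mul_of_pos_left hcon ?_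
      exact lt_of_le_of_lt (hFq0 t) hlt
    linarith
  -- integrate
  have hQP : ∫ t in Astar, Qgt t ∂μ ≤ ∫ t in Astar, Pgt t ∂μ := by
    refine integral_mono_ae hQgti.integrableOn hPgti.integrableOn ?_
    exact (ae_restrict_iff' hAstarm).2 (by filter_upwards [hae] with t h ht; exact h ht)
  have hidp := hid Astar hAstarm h1 hh1 Fp Pgt
    (fun A hA => heqp A hA _ measurableSet_Iic) (fun A hA => heqp A hA _ measurableSet_Ioi)
  have hidq := hid Astar hAstarm h2 hh2 Fq Qgt
    (fun A hA => heqq A hA _ measurableSet_Iic) (fun A hA => heqq A hA _ measurableSet_Ioi)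
  have hAstar_le : ∫ t in Astar, Fp t ∂μ ≤ ∫ t in Astar, Fq t ∂μ := by linarith
  have hcompl : ∫ t in Astarᶜ, Fp t ∂μ ≤ ∫ t in Astarᶜ, Fq t ∂μ := by
    refine setIntegral_mono_on hFpi.integrableOn hFqi.integrableOn hAstarm.compl ?_
    intro t ht
    have : ¬ (Fq t < Fp t) := ht
    linarith [not_lt.1 this]
  have htot : ∫ t, Fp t ∂μ ≤ ∫ t, Fq t ∂μ := by
    rw [← integral_add_compl hAstarm hFpi, ← integral_add_compl hAstarm hFqi]
    linarith
  have e1 : (Pr {ω | h1 ω ≤ c}).toReal = ∫ t, Fp t ∂μ := by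
    have := heqp Set.univ MeasurableSet.univ _ (measurableSet_Iic (a := c))
    simpa using this
  have e2 : (Pr {ω | h2 ω ≤ c}).toReal = ∫ t, Fq t ∂μ := by
    have := heqq Set.univ MeasurableSet.univ _ (measurableSet_Iic (a := c))
    simpa using this
  rw [e1, e2]; exact htot



open MeasureTheory ProbabilityTheory

set_option maxHeartbeats 2000000 in
/-- Theorem 4: Under MLR (Assumption 2), positive regression dependence
of the signed false-null statistics (Assumption 3), the conditional positive regression
dependence Assumption 5, and the multivariate monotone likelihood ratio condition
(Assumption 7, MMLR), Procedure 2 (constant critical value α) satisfies mdFWER ≤ α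
for every n and every configuration of parameters. -/
theorem procedure2_controls_mdFWER_MMLR
    {Ω : Type*} [MeasurableSpace Ω] (Pr : Measure Ω) [IsProbabilityMeasure Pr]
    (F : ℝ → ℝ → ℝ)
    (hFcont : ∀ θ', Continuous (F θ'))
    (hFmono : ∀ θ', Monotone (F θ'))
    (hF0strict : StrictMono (F 0))
    (hFsym : ∀ x : ℝ, F 0 (-x) = 1 - F 0 x)
    (hstoch : ∀ θ' θ'' : ℝ, θ' ≤ θ'' → ∀ x, F θ'' x ≤ F θ' x)
    -- MLR assumption (Assumption 2)
    (f : ℝ → ℝ → ℝ)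
    (hf_nonneg : ∀ θ' x, 0 ≤ f θ' x)
    (hf_meas : ∀ θ', Measurable (f θ'))
    (hf_cdf : ∀ θ' x, F θ' x = ∫ t in Set.Iic x, f θ' t)
    (hMLR : ∀ θ' θ'' : ℝ, θ' < θ'' → ∀ x₁ x₂ : ℝ, x₁ < x₂ →
      f θ'' x₁ * f θ' x₂ ≤ f θ'' x₂ * f θ' x₁)
    (n : ℕ) (θ : Fin n → ℝ)
    (T : Fin n → Ω → ℝ) (hT : ∀ i, Measurable (T i))
    (hcdf : ∀ i x, (Pr {ω | T i ω ≤ x}).toReal = F (θ i) x)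
    -- Assumption 3: positive regression dependence of the signed false-null statistics
    (hPRD : ∀ k : {i : Fin n // θ i ≠ 0},
      ∀ φ : ({i : Fin n // θ i ≠ 0} → ℝ) → ℝ,
      Measurable φ → Monotone φ → (∃ C, ∀ x, |φ x| ≤ C) →
      ∀ u u' : ℝ, u ≤ u' →
        (Pr {ω | u ≤ Real.sign (θ k.1) * T k.1 ω} ≠ 0 →
         Pr {ω | u' ≤ Real.sign (θ k.1) * T k.1 ω} ≠ 0 →
          (∫ ω in {ω | u ≤ Real.sign (θ k.1) * T k.1 ω},
              φ (fun i => Real.sign (θ i.1) * T i.1 ω) ∂Pr)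
              / (Pr {ω | u ≤ Real.sign (θ k.1) * T k.1 ω}).toReal
            ≤ (∫ ω in {ω | u' ≤ Real.sign (θ k.1) * T k.1 ω},
              φ (fun i => Real.sign (θ i.1) * T i.1 ω) ∂Pr)
              / (Pr {ω | u' ≤ Real.sign (θ k.1) * T k.1 ω}).toReal) ∧
        (Pr {ω | Real.sign (θ k.1) * T k.1 ω < u} ≠ 0 →
         Pr {ω | Real.sign (θ k.1) * T k.1 ω < u'} ≠ 0 →
          (∫ ω in {ω | Real.sign (θ k.1) * T k.1 ω < u},
              φ (fun i => Real.sign (θ i.1) * T i.1 ω) ∂Pr)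
              / (Pr {ω | Real.sign (θ k.1) * T k.1 ω < u}).toReal
            ≤ (∫ ω in {ω | Real.sign (θ k.1) * T k.1 ω < u'},
              φ (fun i => Real.sign (θ i.1) * T i.1 ω) ∂Pr)
              / (Pr {ω | Real.sign (θ k.1) * T k.1 ω < u'}).toReal))
    -- Assumption 5: conditional positive regression dependence of the false-null
    -- statistics and the first true-null statistic
    (h5 : ∀ i₀ : Fin n, θ i₀ = 0 → (∀ l, l < i₀ → θ l ≠ 0) →
      ∀ (j : ℕ) (hj : j ≤ (i₀ : ℕ)),
      ∀ φ : (Fin (i₀ : ℕ) → ℝ) → ℝ,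
        Measurable φ → Monotone φ → (∀ x, 0 ≤ φ x) → (∃ C, ∀ x, φ x ≤ C) →
      ∀ u u' : ℝ, u ≤ u' →
        (∀ᵐ ω ∂Pr,
          (Pr[fun ω' => φ (fun l => T (Fin.castLE i₀.isLt.le l) ω') *
                (if u ≤ T i₀ ω' then 1 else 0)
            | MeasurableSpace.comap
                (fun ω'' (l : Fin j) => T (Fin.castLE (hj.trans i₀.isLt.le) l) ω'')
                inferInstance]) ω *
          (Pr[fun ω' => (if u' ≤ T i₀ ω' then (1 : ℝ) else 0)
            | MeasurableSpace.comap
                (fun ω'' (l : Fin j) => T (Fin.castLE (hj.trans i₀.isLt.le) l) ω'')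
                inferInstance]) ω
          ≤
          (Pr[fun ω' => φ (fun l => T (Fin.castLE i₀.isLt.le l) ω') *
                (if u' ≤ T i₀ ω' then 1 else 0)
            | MeasurableSpace.comap
                (fun ω'' (l : Fin j) => T (Fin.castLE (hj.trans i₀.isLt.le) l) ω'')
                inferInstance]) ω *
          (Pr[fun ω' => (if u ≤ T i₀ ω' then (1 : ℝ) else 0)
            | MeasurableSpace.comap
                (fun ω'' (l : Fin j) => T (Fin.castLE (hj.trans i₀.isLt.le) l) ω'')
                inferInstance]) ω) ∧
        (∀ᵐ ω ∂Pr,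
          (Pr[fun ω' => φ (fun l => T (Fin.castLE i₀.isLt.le l) ω') *
                (if T i₀ ω' < u then 1 else 0)
            | MeasurableSpace.comap
                (fun ω'' (l : Fin j) => T (Fin.castLE (hj.trans i₀.isLt.le) l) ω'')
                inferInstance]) ω *
          (Pr[fun ω' => (if T i₀ ω' < u' then (1 : ℝ) else 0)
            | MeasurableSpace.comap
                (fun ω'' (l : Fin j) => T (Fin.castLE (hj.trans i₀.isLt.le) l) ω'')
                inferInstance]) ω
          ≤
          (Pr[fun ω' => φ (fun l => T (Fin.castLE i₀.isLt.le l) ω') *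
                (if T i₀ ω' < u' then 1 else 0)
            | MeasurableSpace.comap
                (fun ω'' (l : Fin j) => T (Fin.castLE (hj.trans i₀.isLt.le) l) ω'')
                inferInstance]) ω *
          (Pr[fun ω' => (if T i₀ ω' < u then (1 : ℝ) else 0)
            | MeasurableSpace.comap
                (fun ω'' (l : Fin j) => T (Fin.castLE (hj.trans i₀.isLt.le) l) ω'')
                inferInstance]) ω))
    -- Assumption 7 (MMLR): conditional densities of T_j and T_{i₀} given the
    -- preceding statistics are in monotone likelihood ratio order
    (hMMLR : ∀ i₀ : Fin n, θ i₀ = 0 → (∀ l, l < i₀ → θ l ≠ 0) →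
      ∀ j : Fin n, j < i₀ →
      ∃ fj gj : (Fin (j : ℕ) → ℝ) → ℝ → ℝ,
        Measurable (fun p : (Fin (j : ℕ) → ℝ) × ℝ => fj p.1 p.2) ∧
        Measurable (fun p : (Fin (j : ℕ) → ℝ) × ℝ => gj p.1 p.2) ∧
        (∀ t x, 0 ≤ fj t x) ∧ (∀ t x, 0 ≤ gj t x) ∧
        (∀ A : Set (Fin (j : ℕ) → ℝ), MeasurableSet A →
         ∀ B : Set ℝ, MeasurableSet B →
          (Pr {ω | (fun l : Fin (j : ℕ) => T (Fin.castLE j.isLt.le l) ω) ∈ A ∧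
              T j ω ∈ B}).toReal
            = ∫ t in A, (∫ x in B, fj t x)
                ∂(Pr.map (fun ω (l : Fin (j : ℕ)) => T (Fin.castLE j.isLt.le l) ω))) ∧
        (∀ A : Set (Fin (j : ℕ) → ℝ), MeasurableSet A →
         ∀ B : Set ℝ, MeasurableSet B →
          (Pr {ω | (fun l : Fin (j : ℕ) => T (Fin.castLE j.isLt.le l) ω) ∈ A ∧
              T i₀ ω ∈ B}).toReal
            = ∫ t in A, (∫ x in B, gj t x)
                ∂(Pr.map (fun ω (l : Fin (j : ℕ)) => T (Fin.castLE j.isLt.le l) ω))) ∧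
        (∀ᵐ t ∂(Pr.map (fun ω (l : Fin (j : ℕ)) => T (Fin.castLE j.isLt.le l) ω)),
          ∀ x₁ x₂ : ℝ, x₁ < x₂ → fj t x₁ * gj t x₂ ≤ fj t x₂ * gj t x₁))
    (α : ℝ) (hα : α ∈ Set.Ioo (0 : ℝ) 1)
    (c₁ c₂ : ℝ) (hc₁ : F 0 c₁ = α / 2) (hc₂ : F 0 c₂ = 1 - α / 2) :
    (Pr {ω | ∃ i : Fin n,
        (∀ j : Fin n, j ≤ i →
          2 * min (F 0 (T j ω)) (1 - F 0 (T j ω)) ≤ α) ∧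
        (θ i = 0 ∨ (θ i ≠ 0 ∧ θ i * T i ω < 0))}).toReal ≤ α := by
  classical
  have hα0 : (0:ℝ) < α := hα.1
  have hα1 : α < 1 := hα.2
  have h1α2 : (0:ℝ) < 1 - α/2 := by linarith
  set κ : ℝ := (α/2)/(1-α/2) with hκdef
  have hκ0 : 0 ≤ κ := by positivity
  have hκeq : κ * (1-α/2) = α/2 := div_mul_cancel₀ _ (ne_of_gt h1α2)
  have hκ1 : κ ≤ 1 := by rw [div_le_one h1α2]; linarith
  have hκα : κ ≤ α := by
    rw [div_le_iff₀ h1α2]; nlinarith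
  have hfinalκ : κ + (1-κ)*(α/2) = α := by nlinarith [hκeq]
  -- basic facts about F 0 and the critical constants
  have hF00 : F 0 0 = 1/2 := by
    have := hFsym 0; rw [neg_zero] at this; linarith
  have hc1neg : c₁ < 0 := by
    have : F 0 c₁ < F 0 0 := by rw [hc₁, hF00]; linarith
    exact hF0strict.lt_iff_lt.1 this
  have hc2pos : 0 < c₂ := by
    have : F 0 0 < F 0 c₂ := by rw [hc₂, hF00]; linarith
    exact hF0strict.lt_iff_lt.1 this
  have hc12 : c₁ < c₂ := lt_trans hc1neg hc2pos
  have hc1c2 : c₁ = -c₂ := by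
    have h1 : F 0 (-c₂) = F 0 c₁ := by rw [hFsym, hc₂, hc₁]; ring
    exact (hF0strict.injective h1).symm
  have hF0nonneg : ∀ x, 0 ≤ F 0 x := by
    intro x
    rw [hf_cdf]
    exact setIntegral_nonneg measurableSet_Iic fun t _ => hf_nonneg 0 t
  have hF0le1 : ∀ x, F 0 x ≤ 1 := by
    intro x
    have := hFsym (-x); rw [neg_neg] at this
    have h2 := hF0nonneg (-x)
    linarith
  -- marginal distribution facts
  have hPle : ∀ (i : Fin n) (x : ℝ), (Pr {ω | T i ω ≤ x}).toReal = F (θ i) x := hcdf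
  have hPlt : ∀ (i : Fin n) (x : ℝ), (Pr {ω | T i ω < x}).toReal = F (θ i) x := by
    intro i x
    have hub : (Pr {ω | T i ω < x}).toReal ≤ F (θ i) x := by
      rw [← hPle i x]
      exact ENNReal.toReal_mono (measure_ne_top Pr _)
        (measure_mono fun ω (h : T i ω < x) => le_of_lt h)
    have hlb : F (θ i) x ≤ (Pr {ω | T i ω < x}).toReal := by
      have hseq : Filter.Tendsto (fun k : ℕ => x - 1/(k+1)) Filter.atTop (nhds x) := by
        have := tendsto_one_div_add_atTop_nhds_zero_nat (𝕜 := ℝ)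
        have h2 := Filter.Tendsto.sub (tendsto_const_nhds (x := x)
          (f := Filter.atTop (α := ℕ))) this
        simpa using h2
      have hFlim : Filter.Tendsto (fun k : ℕ => F (θ i) (x - 1/(k+1)))
          Filter.atTop (nhds (F (θ i) x)) := ((hFcont (θ i)).tendsto x).comp hseq
      refine le_of_tendsto hFlim (Filter.Eventually.of_forall fun k => ?_)
      rw [← hPle i (x - 1/(k+1))]
      refine ENNReal.toReal_mono (measure_ne_top Pr _)
        (measure_mono fun ω (h : T i ω ≤ x - 1/(k+1)) => ?_)
      have hpos : (0:ℝ) < 1/((k:ℝ)+1) := by positivity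
      show T i ω < x
      linarith
    linarith
  have hcompl : ∀ (s : Set Ω), MeasurableSet s → (Pr sᶜ).toReal = 1 - (Pr s).toReal := by
    intro s hs
    have := prob_add_prob_compl (μ := Pr) hs
    have h2 := ENNReal.toReal_add (measure_ne_top Pr s) (measure_ne_top Pr sᶜ)
    rw [this] at h2
    simp at h2
    linarith
  have hPge : ∀ (i : Fin n) (x : ℝ), (Pr {ω | x ≤ T i ω}).toReal = 1 - F (θ i) x := by
    intro i x
    have : {ω | x ≤ T i ω} = {ω | T i ω < x}ᶜ := by
      ext ω; simp [not_lt]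
    rw [this, hcompl _ (measurableSet_lt (hT i) measurable_const), hPlt]
  have hPgt : ∀ (i : Fin n) (x : ℝ), (Pr {ω | x < T i ω}).toReal = 1 - F (θ i) x := by
    intro i x
    have : {ω | x < T i ω} = {ω | T i ω ≤ x}ᶜ := by
      ext ω; simp [not_le]
    rw [this, hcompl _ (measurableSet_le (hT i) measurable_const), hPle]
  have hF01 : ∀ (i : Fin n) (x : ℝ), 0 ≤ F (θ i) x ∧ F (θ i) x ≤ 1 := by
    intro i x
    constructor
    · rw [← hPle i x]; exact ENNReal.toReal_nonneg
    · rw [← hPle i x]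
      exact ENNReal.toReal_le_of_le_ofReal zero_le_one (by simpa using prob_le_one (μ := Pr))
  have hFtendsto : ∀ i : Fin n, Filter.Tendsto (fun K : ℕ => F (θ i) K)
      Filter.atTop (nhds 1) := by
    intro i
    have hmono : Monotone (fun K : ℕ => {ω | T i ω ≤ (K:ℝ)}) := by
      intro a b hab ω (h : T i ω ≤ (a:ℝ))
      exact le_trans h (by exact_mod_cast hab)
    have h1 := tendsto_measure_iUnion_atTop (μ := Pr) hmono
    have hcover : (⋃ K : ℕ, {ω | T i ω ≤ (K:ℝ)}) = Set.univ := by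
      ext ω
      simp only [Set.mem_iUnion, Set.mem_univ, iff_true, Set.mem_setOf_eq]
      exact exists_nat_ge (T i ω)
    rw [hcover] at h1
    simp only [measure_univ] at h1
    have h2 := (ENNReal.tendsto_toReal (a := 1) (by norm_num)).comp h1
    simp only [ENNReal.toReal_one] at h2
    have h3 : (fun K : ℕ => (Pr {ω | T i ω ≤ (K:ℝ)}).toReal) = fun K : ℕ => F (θ i) K := by
      funext K; exact hPle i K
    rw [show (ENNReal.toReal ∘ (⇑Pr ∘ fun K : ℕ => {ω | T i ω ≤ (K:ℝ)}))
        = fun K : ℕ => (Pr {ω | T i ω ≤ (K:ℝ)}).toReal from rfl, h3] at h2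
    exact h2

  -- integrability of the densities on lower rays
  have hfi0 : ∀ x : ℝ, IntegrableOn (f 0) (Set.Iic x) volume := by
    intro x
    by_contra hni
    have h1 : F 0 x = 0 := by rw [hf_cdf]; exact integral_undef hni
    have h2 : F 0 (x+1) = 0 := by
      rw [hf_cdf]
      refine integral_undef fun hint => hni (IntegrableOn.mono_set hint ?_)
      exact Set.Iic_subset_Iic.2 (by linarith)
    have := hF0strict (show x < x + 1 by linarith)
    rw [h1, h2] at this
    exact lt_irrefl _ this
  have hfi : ∀ (i : Fin n) (x : ℝ), IntegrableOn (f (θ i)) (Set.Iic x) volume := by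
    intro i x
    by_contra hni
    have hzero : ∀ y : ℝ, x ≤ y → F (θ i) y = 0 := by
      intro y hy
      rw [hf_cdf]
      refine integral_undef fun hint => hni (IntegrableOn.mono_set hint (Set.Iic_subset_Iic.2 hy))
    have := hFtendsto i
    have hev : ∀ᶠ K : ℕ in Filter.atTop, F (θ i) K = 0 := by
      obtain ⟨K₀, hK₀⟩ := exists_nat_ge x
      refine Filter.eventually_atTop.2 ⟨K₀, fun K hK => hzero K (le_trans hK₀ ?_)⟩
      exact_mod_cast hK
    have hlim0 : Filter.Tendsto (fun K : ℕ => F (θ i) K) Filter.atTop (nhds 0) := by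
      refine Filter.Tendsto.congr' ?_ tendsto_const_nhds
      filter_upwards [hev] with K hK; exact hK.symm
    have : (1:ℝ) = 0 := tendsto_nhds_unique this hlim0
    norm_num at this
  -- set integral identities for f over Ioc
  have hIoc : ∀ (θ' : ℝ), (∀ y : ℝ, IntegrableOn (f θ') (Set.Iic y) volume) →
      ∀ a b : ℝ, a ≤ b → ∫ x in Set.Ioc a b, f θ' x = F θ' b - F θ' a := by
    intro θ' hint a b hab
    have hsplit : Set.Iic a ∪ Set.Ioc a b = Set.Iic b := Set.Iic_union_Ioc_eq_Iic hab
    have hdisj : Disjoint (Set.Iic a) (Set.Ioc a b) := by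
      rw [Set.disjoint_left]
      rintro x (hx : x ≤ a) ⟨hx2, -⟩
      exact absurd hx (not_le.2 hx2)
    have hIocint : IntegrableOn (f θ') (Set.Ioc a b) volume :=
      IntegrableOn.mono_set (hint b) (fun x hx => hx.2)
    have := setIntegral_union hdisj measurableSet_Ioc
      (hint a) hIocint (μ := volume) (f := f θ')
    rw [hsplit] at this
    rw [hf_cdf θ' b, hf_cdf θ' a, this]
    ring

  -- likelihood-ratio chains
  have hchain_pos : ∀ i : Fin n, 0 < θ i → F (θ i) c₁ * (1-α/2) ≤ (α/2) * F (θ i) c₂ := by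
    intro i hθ
    have hcross := aux_cross (u := f (θ i)) (v := f 0) (L := Set.Iic c₁) (H := Set.Ioc c₁ c₂)
      measurableSet_Iic measurableSet_Ioc
      (fun x hx y hy => by
        have hxy : x < y := lt_of_le_of_lt hx hy.1
        have := hMLR 0 (θ i) hθ x y hxy
        linarith [this])
      (hfi i c₁) (hfi0 c₁)
      (IntegrableOn.mono_set (hfi i c₂) (fun x hx => hx.2))
      (IntegrableOn.mono_set (hfi0 c₂) (fun x hx => hx.2))
    rw [hIoc 0 hfi0 c₁ c₂ (le_of_lt hc12), hIoc (θ i) (hfi i) c₁ c₂ (le_of_lt hc12)] at hcross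
    rw [← hf_cdf] at hcross
    rw [show (∫ x in Set.Iic c₁, f 0 x) = F 0 c₁ from (hf_cdf 0 c₁).symm] at hcross
    rw [hc₁, hc₂] at hcross
    nlinarith [hcross, (hF01 i c₁).1]
  have hchain_neg : ∀ i : Fin n, θ i < 0 →
      (1 - F (θ i) c₂) * (1-α/2) ≤ (α/2) * (1 - F (θ i) c₁) := by
    intro i hθ
    have hkey : ∀ K : ℕ, (c₂:ℝ) ≤ K →
        (1-α) * (F (θ i) K - F (θ i) c₂) ≤ (F (θ i) c₂ - F (θ i) c₁) * (α/2) := by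
      intro K hK
      have hcross := aux_cross (u := f 0) (v := f (θ i))
        (L := Set.Ioc c₁ c₂) (H := Set.Ioc c₂ (K:ℝ))
        measurableSet_Ioc measurableSet_Ioc
        (fun x hx y hy => by
          have hxy : x < y := lt_of_le_of_lt hx.2 hy.1
          have := hMLR (θ i) 0 hθ x y hxy
          linarith [this])
        (IntegrableOn.mono_set (hfi0 c₂) (fun x hx => hx.2))
        (IntegrableOn.mono_set (hfi i c₂) (fun x hx => hx.2))
        (IntegrableOn.mono_set (hfi0 K) (fun x hx => hx.2))
        (IntegrableOn.mono_set (hfi i K) (fun x hx => hx.2))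
      rw [hIoc 0 hfi0 c₁ c₂ (le_of_lt hc12), hIoc (θ i) (hfi i) c₁ c₂ (le_of_lt hc12),
        hIoc 0 hfi0 c₂ K hK, hIoc (θ i) (hfi i) c₂ K hK, hc₁, hc₂] at hcross
      have hb1 : F 0 K ≤ 1 := hF0le1 K
      have hb2 : 1 - α/2 ≤ F 0 K := by
        rw [← hc₂]; exact hFmono 0 hK
      nlinarith [hcross, (hF01 i c₂).1, (hF01 i c₁).1,
        sub_nonneg.2 (hFmono (θ i) (le_of_lt hc12)), sub_nonneg.2 (hFmono (θ i) hK)]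
    have hlim : Filter.Tendsto (fun K : ℕ => (1-α) * (F (θ i) K - F (θ i) c₂))
        Filter.atTop (nhds ((1-α) * (1 - F (θ i) c₂))) := by
      exact (Filter.Tendsto.sub (hFtendsto i) tendsto_const_nhds).const_mul (1-α)
    have hle : (1-α) * (1 - F (θ i) c₂) ≤ (F (θ i) c₂ - F (θ i) c₁) * (α/2) := by
      refine le_of_tendsto hlim ?_
      obtain ⟨K₀, hK₀⟩ := exists_nat_ge c₂
      exact Filter.eventually_atTop.2 ⟨K₀, fun K hK =>
        hkey K (le_trans hK₀ (by exact_mod_cast hK))⟩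
    nlinarith [hle, (hF01 i c₂).2, (hF01 i c₂).1, (hF01 i c₁).1]
  -- the marginal ratio for false nulls (strict tails)
  have hratio : ∀ i : Fin n, θ i ≠ 0 →
      (Pr {ω | Real.sign (θ i) * T i ω < c₁}).toReal
        ≤ κ * (Pr {ω | Real.sign (θ i) * T i ω < c₂}).toReal := by
    intro i hθ
    rcases lt_or_gt_of_ne hθ with hneg | hpos
    · have hsgn : Real.sign (θ i) = -1 := Real.sign_of_neg hneg
      have hset : ∀ c : ℝ, {ω | Real.sign (θ i) * T i ω < c} = {ω | -c < T i ω} := by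
        intro c; ext ω
        simp only [Set.mem_setOf_eq, hsgn]
        constructor <;> intro h <;> linarith
      rw [hset, hset, hPgt, hPgt]
      have h1 : -c₁ = c₂ := by rw [hc1c2, neg_neg]
      have h2 : -c₂ = c₁ := hc1c2.symm
      rw [h1, h2]
      have := hchain_neg i hneg
      rw [hκdef, div_mul_eq_mul_div, le_div_iff₀ h1α2]
      linarith
    · have hsgn : Real.sign (θ i) = 1 := Real.sign_of_pos hpos
      have hset : ∀ c : ℝ, {ω | Real.sign (θ i) * T i ω < c} = {ω | T i ω < c} := by
        intro c; ext ω
        simp only [Set.mem_setOf_eq, hsgn]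
        constructor <;> intro h <;> linarith
      rw [hset, hset, hPlt, hPlt]
      have := hchain_pos i hpos
      rw [hκdef, div_mul_eq_mul_div, le_div_iff₀ h1α2]
      linarith
  -- the closed lower tail event has the same probability as the open one
  have hSatom : ∀ i : Fin n, θ i ≠ 0 →
      Pr ({ω | Real.sign (θ i) * T i ω ≤ c₁} \ {ω | Real.sign (θ i) * T i ω < c₁}) = 0 := by
    intro i hθ
    have hsub : {ω | Real.sign (θ i) * T i ω < c₁} ⊆ {ω | Real.sign (θ i) * T i ω ≤ c₁} :=
      Set.setOf_subset_setOf.2 fun ω h => le_of_lt h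
    have heq : (Pr {ω | Real.sign (θ i) * T i ω ≤ c₁}) = (Pr {ω | Real.sign (θ i) * T i ω < c₁}) := by
      have htR : (Pr {ω | Real.sign (θ i) * T i ω ≤ c₁}).toReal
          = (Pr {ω | Real.sign (θ i) * T i ω < c₁}).toReal := by
        rcases lt_or_gt_of_ne hθ with hneg | hpos
        · have hsgn : Real.sign (θ i) = -1 := Real.sign_of_neg hneg
          have hs1 : {ω | Real.sign (θ i) * T i ω ≤ c₁} = {ω | -c₁ ≤ T i ω} := by
            ext ω; simp only [Set.mem_setOf_eq, hsgn]
            constructor <;> intro h <;> linarith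
          have hs2 : {ω | Real.sign (θ i) * T i ω < c₁} = {ω | -c₁ < T i ω} := by
            ext ω; simp only [Set.mem_setOf_eq, hsgn]
            constructor <;> intro h <;> linarith
          rw [hs1, hs2, hPge, hPgt]
        · have hsgn : Real.sign (θ i) = 1 := Real.sign_of_pos hpos
          have hs1 : {ω | Real.sign (θ i) * T i ω ≤ c₁} = {ω | T i ω ≤ c₁} := by
            ext ω; simp only [Set.mem_setOf_eq, hsgn]
            constructor <;> intro h <;> linarith
          have hs2 : {ω | Real.sign (θ i) * T i ω < c₁} = {ω | T i ω < c₁} := by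
            ext ω; simp only [Set.mem_setOf_eq, hsgn]
            constructor <;> intro h <;> linarith
          rw [hs1, hs2, hPle, hPlt]
      exact (ENNReal.toReal_eq_toReal_iff' (measure_ne_top Pr _) (measure_ne_top Pr _)).1 htR
    have hSmeas : MeasurableSet {ω | Real.sign (θ i) * T i ω < c₁} :=
      measurableSet_lt (((hT i).const_mul _)) measurable_const
    rw [measure_diff hsub hSmeas.nullMeasurableSet (measure_ne_top Pr _), heq, tsub_self]

  -- the "all passed so far" events
  set G : ℕ → Set Ω := fun k =>
    {ω | ∀ j : Fin n, (j:ℕ) < k → c₂ ≤ Real.sign (θ j) * T j ω} with hGdef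
  have hSmeas : ∀ j : Fin n, Measurable (fun ω => Real.sign (θ j) * T j ω) :=
    fun j => (hT j).const_mul _
  have hGmeas : ∀ k, MeasurableSet (G k) := by
    intro k
    have hrw : G k = ⋂ j : Fin n, {ω | (j:ℕ) < k → c₂ ≤ Real.sign (θ j) * T j ω} := by
      ext ω; simp [hGdef, Set.mem_iInter]
    rw [hrw]
    refine MeasurableSet.iInter fun j => ?_
    by_cases h : (j:ℕ) < k
    · have : {ω | (j:ℕ) < k → c₂ ≤ Real.sign (θ j) * T j ω}
          = {ω | c₂ ≤ Real.sign (θ j) * T j ω} := by ext ω; simp [h]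
      rw [this]; exact measurableSet_le measurable_const (hSmeas j)
    · have : {ω | (j:ℕ) < k → c₂ ≤ Real.sign (θ j) * T j ω} = Set.univ := by ext ω; simp [h]
      rw [this]; exact MeasurableSet.univ
  have hG0 : G 0 = Set.univ := by
    ext ω; simp [hGdef]
  have hGsucc : ∀ i : Fin n, G ((i:ℕ)+1) = G (i:ℕ) ∩ {ω | c₂ ≤ Real.sign (θ i) * T i ω} := by
    intro i
    ext ω
    simp only [hGdef, Set.mem_setOf_eq, Set.mem_inter_iff]
    constructor
    · intro h
      exact ⟨fun j hj => h j (lt_trans hj (Nat.lt_succ_self _)), h i (Nat.lt_succ_self _)⟩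
    · rintro ⟨h1, h2⟩ j hj
      rcases Nat.lt_succ_iff_lt_or_eq.1 hj with hj' | hj'
      · exact h1 j hj'
      · have : j = i := Fin.ext hj'
        rw [this]; exact h2
  have hGsplit : ∀ i : Fin n, (Pr (G (i:ℕ))).toReal
      = (Pr (G ((i:ℕ)+1))).toReal
        + (Pr (G (i:ℕ) ∩ {ω | Real.sign (θ i) * T i ω < c₂})).toReal := by
    intro i
    have hdiff : G (i:ℕ) \ {ω | c₂ ≤ Real.sign (θ i) * T i ω}
        = G (i:ℕ) ∩ {ω | Real.sign (θ i) * T i ω < c₂} := by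
      rw [Set.diff_eq]
      congr 1
      ext ω; simp [not_le]
    have := measure_inter_add_diff (μ := Pr)
      (t := {ω | c₂ ≤ Real.sign (θ i) * T i ω}) (G (i:ℕ))
      (measurableSet_le measurable_const (hSmeas i))
    rw [hdiff] at this
    rw [← hGsucc i] at this
    rw [← this, ENNReal.toReal_add (measure_ne_top Pr _) (measure_ne_top Pr _)]
  -- the single-step PRD bound
  have hstep : ∀ i : Fin n, (∀ j : Fin n, j ≤ i → θ j ≠ 0) →
      (Pr (G (i:ℕ) ∩ {ω | Real.sign (θ i) * T i ω ≤ c₁})).toReal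
        ≤ κ * (Pr (G (i:ℕ) ∩ {ω | Real.sign (θ i) * T i ω < c₂})).toReal := by
    intro i hθall
    have hθi : θ i ≠ 0 := hθall i le_rfl
    have hRHS0 : 0 ≤ κ * (Pr (G (i:ℕ) ∩ {ω | Real.sign (θ i) * T i ω < c₂})).toReal := by
      positivity
    have hred : (Pr (G (i:ℕ) ∩ {ω | Real.sign (θ i) * T i ω ≤ c₁})).toReal
        ≤ (Pr (G (i:ℕ) ∩ {ω | Real.sign (θ i) * T i ω < c₁})).toReal := by
      have hsub : G (i:ℕ) ∩ {ω | Real.sign (θ i) * T i ω ≤ c₁}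
          ⊆ (G (i:ℕ) ∩ {ω | Real.sign (θ i) * T i ω < c₁})
            ∪ ({ω | Real.sign (θ i) * T i ω ≤ c₁} \ {ω | Real.sign (θ i) * T i ω < c₁}) := by
        rintro ω ⟨hg, hle⟩
        by_cases h : Real.sign (θ i) * T i ω < c₁
        · exact Or.inl ⟨hg, h⟩
        · exact Or.inr ⟨hle, h⟩
      have h1 : Pr (G (i:ℕ) ∩ {ω | Real.sign (θ i) * T i ω ≤ c₁})
          ≤ Pr (G (i:ℕ) ∩ {ω | Real.sign (θ i) * T i ω < c₁}) := by
        calc Pr (G (i:ℕ) ∩ {ω | Real.sign (θ i) * T i ω ≤ c₁})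
            ≤ Pr ((G (i:ℕ) ∩ {ω | Real.sign (θ i) * T i ω < c₁})
              ∪ ({ω | Real.sign (θ i) * T i ω ≤ c₁} \ {ω | Real.sign (θ i) * T i ω < c₁})) :=
              measure_mono hsub
          _ ≤ Pr (G (i:ℕ) ∩ {ω | Real.sign (θ i) * T i ω < c₁})
              + Pr ({ω | Real.sign (θ i) * T i ω ≤ c₁} \ {ω | Real.sign (θ i) * T i ω < c₁}) :=
              measure_union_le _ _
          _ = Pr (G (i:ℕ) ∩ {ω | Real.sign (θ i) * T i ω < c₁}) := by
              rw [hSatom i hθi, add_zero]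
      exact ENNReal.toReal_mono (measure_ne_top Pr _) h1
    by_cases h2 : Pr {ω | Real.sign (θ i) * T i ω < c₂} = 0
    · have h1 : Pr (G (i:ℕ) ∩ {ω | Real.sign (θ i) * T i ω < c₁}) = 0 := by
        refine measure_mono_null ?_ h2
        rintro ω ⟨-, h⟩
        exact lt_trans h hc12
      refine le_trans hred (le_trans ?_ hRHS0)
      rw [h1]; simp
    by_cases h1 : Pr {ω | Real.sign (θ i) * T i ω < c₁} = 0
    · have h1' : Pr (G (i:ℕ) ∩ {ω | Real.sign (θ i) * T i ω < c₁}) = 0 :=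
        measure_mono_null Set.inter_subset_right h1
      refine le_trans hred (le_trans ?_ hRHS0)
      rw [h1']; simp
    -- main case : apply the PRD assumption
    set U : Set ({i' : Fin n // θ i' ≠ 0} → ℝ) :=
      {y | ∀ l : {i' : Fin n // θ i' ≠ 0}, l.1 < i → c₂ ≤ y l} with hUdef
    have hUmeas : MeasurableSet U := by
      rw [hUdef, Set.setOf_forall]
      refine MeasurableSet.iInter fun l => ?_
      by_cases h : l.1 < i
      · have : {y : {i' : Fin n // θ i' ≠ 0} → ℝ | l.1 < i → c₂ ≤ y l}
            = {y | c₂ ≤ y l} := by ext y; simp [h]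
        rw [this]
        exact measurableSet_le measurable_const (measurable_pi_apply l)
      · have : {y : {i' : Fin n // θ i' ≠ 0} → ℝ | l.1 < i → c₂ ≤ y l} = Set.univ := by
          ext y; simp [h]
        rw [this]; exact MeasurableSet.univ
    set φ : ({i' : Fin n // θ i' ≠ 0} → ℝ) → ℝ := fun y => if y ∈ U then 1 else 0 with hφdef
    have hφmeas : Measurable φ := Measurable.ite hUmeas measurable_const measurable_const
    have hφmono : Monotone φ := by
      intro x y hxy
      by_cases hx : x ∈ U
      · have hy : y ∈ U := fun l hl => le_trans (hx l hl) (hxy l)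
        simp [hφdef, hx, hy]
      · have : φ x = 0 := by simp [hφdef, hx]
        rw [this]
        by_cases hy : y ∈ U <;> simp [hφdef, hy]
    have hφbdd : ∃ C, ∀ x, |φ x| ≤ C := by
      refine ⟨1, fun x => ?_⟩
      by_cases h : x ∈ U <;> simp [hφdef, h]
    have hPRD2 := (hPRD ⟨i, hθi⟩ φ hφmeas hφmono hφbdd c₁ c₂ (le_of_lt hc12)).2 h1 h2
    have hcomp : ∀ (V : Set Ω),
        ∫ ω in V, φ (fun l => Real.sign (θ l.1) * T l.1 ω) ∂Pr = (Pr (V ∩ G (i:ℕ))).toReal := by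
      intro V
      have hfun : (fun ω => φ (fun l => Real.sign (θ l.1) * T l.1 ω))
          = (G (i:ℕ)).indicator (fun _ => (1:ℝ)) := by
        funext ω
        by_cases h : ω ∈ G (i:ℕ)
        · have hmem : (fun l : {i' : Fin n // θ i' ≠ 0} => Real.sign (θ l.1) * T l.1 ω) ∈ U :=
            fun l hl => h l.1 hl
          simp [hφdef, hmem, Set.indicator_of_mem h]
        · have hnmem : (fun l : {i' : Fin n // θ i' ≠ 0} => Real.sign (θ l.1) * T l.1 ω) ∉ U := by
            intro hc
            refine h fun j hj => ?_
            exact hc ⟨j, hθall j (le_of_lt hj)⟩ hj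
          simp [hφdef, hnmem, Set.indicator_of_notMem h]
      rw [hfun, setIntegral_indicator (hGmeas (i:ℕ)), setIntegral_const]
      simp
      rfl
    rw [hcomp, hcomp] at hPRD2
    have hp1 : 0 < (Pr {ω | Real.sign (θ i) * T i ω < c₁}).toReal :=
      ENNReal.toReal_pos h1 (measure_ne_top Pr _)
    have hp2 : 0 < (Pr {ω | Real.sign (θ i) * T i ω < c₂}).toReal :=
      ENNReal.toReal_pos h2 (measure_ne_top Pr _)
    have hPle2 : (Pr {ω | Real.sign (θ i) * T i ω < c₁}).toReal
        ≤ κ * (Pr {ω | Real.sign (θ i) * T i ω < c₂}).toReal := hratio i hθi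
    have hB0 : 0 ≤ (Pr ({ω | Real.sign (θ i) * T i ω < c₂} ∩ G (i:ℕ))).toReal :=
      ENNReal.toReal_nonneg
    rw [div_le_div_iff₀ hp1 hp2] at hPRD2
    have hfin : (Pr ({ω | Real.sign (θ i) * T i ω < c₁} ∩ G (i:ℕ))).toReal
        ≤ κ * (Pr ({ω | Real.sign (θ i) * T i ω < c₂} ∩ G (i:ℕ))).toReal := by
      by_cases hB : (Pr ({ω | Real.sign (θ i) * T i ω < c₂} ∩ G (i:ℕ))).toReal = 0
      · have hA : (Pr ({ω | Real.sign (θ i) * T i ω < c₁} ∩ G (i:ℕ))).toReal ≤ 0 := by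
          nlinarith
        rw [hB]; linarith
      · have hBpos : 0 < (Pr ({ω | Real.sign (θ i) * T i ω < c₂} ∩ G (i:ℕ))).toReal :=
          lt_of_le_of_ne hB0 (Ne.symm hB)
        nlinarith
    calc (Pr (G (i:ℕ) ∩ {ω | Real.sign (θ i) * T i ω ≤ c₁})).toReal
        ≤ (Pr (G (i:ℕ) ∩ {ω | Real.sign (θ i) * T i ω < c₁})).toReal := hred
      _ = (Pr ({ω | Real.sign (θ i) * T i ω < c₁} ∩ G (i:ℕ))).toReal := by rw [Set.inter_comm]
      _ ≤ κ * (Pr ({ω | Real.sign (θ i) * T i ω < c₂} ∩ G (i:ℕ))).toReal := hfin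
      _ = κ * (Pr (G (i:ℕ) ∩ {ω | Real.sign (θ i) * T i ω < c₂})).toReal := by
          rw [Set.inter_comm]
  -- telescoping the union of error events before the first true null
  have htoReal_union : ∀ a b : Set Ω, (Pr (a ∪ b)).toReal ≤ (Pr a).toReal + (Pr b).toReal := by
    intro a b
    rw [← ENNReal.toReal_add (measure_ne_top Pr a) (measure_ne_top Pr b)]
    exact ENNReal.toReal_mono
      (ENNReal.add_ne_top.2 ⟨measure_ne_top Pr a, measure_ne_top Pr b⟩)
      (measure_union_le a b)
  have htel : ∀ (M : ℕ), M ≤ n → (∀ j : Fin n, (j:ℕ) < M → θ j ≠ 0) → ∀ k, k ≤ M →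
      (Pr (⋃ i : Fin n, ⋃ (_ : (i:ℕ) < k),
        (G (i:ℕ) ∩ {ω | Real.sign (θ i) * T i ω ≤ c₁}))).toReal
        ≤ κ * (1 - (Pr (G k)).toReal) := by
    intro M hM hMθ k
    induction k with
    | zero =>
      intro _
      have h0 : (⋃ i : Fin n, ⋃ (_ : (i:ℕ) < 0),
          (G (i:ℕ) ∩ {ω | Real.sign (θ i) * T i ω ≤ c₁})) = (∅ : Set Ω) := by
        simp
      rw [h0, hG0]
      simp
    | succ k ih =>
      intro hk1
      have hk : k ≤ M := Nat.le_of_succ_le hk1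
      have hkM : k < M := hk1
      have hkn : k < n := lt_of_lt_of_le hkM hM
      set i : Fin n := ⟨k, hkn⟩ with hidef
      have hiv : (i:ℕ) = k := rfl
      have hUrw : (⋃ i' : Fin n, ⋃ (_ : (i':ℕ) < k+1),
          (G (i':ℕ) ∩ {ω | Real.sign (θ i') * T i' ω ≤ c₁}))
          = (⋃ i' : Fin n, ⋃ (_ : (i':ℕ) < k),
            (G (i':ℕ) ∩ {ω | Real.sign (θ i') * T i' ω ≤ c₁}))
            ∪ (G (i:ℕ) ∩ {ω | Real.sign (θ i) * T i ω ≤ c₁}) := by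
        ext ω
        simp only [Set.mem_iUnion, Set.mem_union]
        constructor
        · rintro ⟨i', hi', hmem⟩
          rcases Nat.lt_succ_iff_lt_or_eq.1 hi' with h | h
          · exact Or.inl ⟨i', h, hmem⟩
          · refine Or.inr ?_
            have : i' = i := Fin.ext h
            rwa [this] at hmem
        · rintro (⟨i', hi', hmem⟩ | hmem)
          · exact ⟨i', lt_trans hi' (Nat.lt_succ_self _), hmem⟩
          · exact ⟨i, by rw [hiv]; exact Nat.lt_succ_self _, hmem⟩
      rw [hUrw]
      have hstep_i := hstep i (fun j hj => hMθ j (lt_of_le_of_lt (show (j:ℕ) ≤ k from hj) hkM))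
      have hsplit_i := hGsplit i
      rw [hiv] at hstep_i hsplit_i
      calc (Pr ((⋃ i' : Fin n, ⋃ (_ : (i':ℕ) < k),
            (G (i':ℕ) ∩ {ω | Real.sign (θ i') * T i' ω ≤ c₁}))
            ∪ (G (i:ℕ) ∩ {ω | Real.sign (θ i) * T i ω ≤ c₁}))).toReal
          ≤ (Pr (⋃ i' : Fin n, ⋃ (_ : (i':ℕ) < k),
            (G (i':ℕ) ∩ {ω | Real.sign (θ i') * T i' ω ≤ c₁}))).toReal
            + (Pr (G (i:ℕ) ∩ {ω | Real.sign (θ i) * T i ω ≤ c₁})).toReal :=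
            htoReal_union _ _
        _ ≤ κ * (1 - (Pr (G k)).toReal)
            + κ * (Pr (G k ∩ {ω | Real.sign (θ i) * T i ω < c₂})).toReal := by
            have := ih hk
            have h2 : (Pr (G (i:ℕ) ∩ {ω | Real.sign (θ i) * T i ω ≤ c₁})).toReal
                ≤ κ * (Pr (G k ∩ {ω | Real.sign (θ i) * T i ω < c₂})).toReal := by
              rw [hiv]
              exact hstep_i
            linarith
        _ ≤ κ * (1 - (Pr (G (k+1))).toReal) := by nlinarith [hsplit_i]

  -- the master lemma at the first true null
  have hmaster : ∀ i₀ : Fin n, θ i₀ = 0 → (∀ l : Fin n, l < i₀ → θ l ≠ 0) →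
      (Pr (G (i₀:ℕ) ∩ {ω | T i₀ ω ≤ c₁ ∨ c₂ ≤ T i₀ ω})).toReal
        ≤ κ * (Pr (G (i₀:ℕ))).toReal + (1-κ)*(α/2) := by
    intro i₀ hθ0 hmin
    by_cases hex : ∃ l : Fin n, l < i₀ ∧ θ l < 0
    · -- Case A : some false null before i₀ has a negative parameter
      obtain ⟨l, hl, hlneg⟩ := hex
      have hgle : (Pr (G (i₀:ℕ))).toReal ≤ (Pr {ω | T l ω ≤ c₁}).toReal := by
        refine ENNReal.toReal_mono (measure_ne_top Pr _) (measure_mono ?_)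
        intro ω hω
        have h1 : c₂ ≤ Real.sign (θ l) * T l ω := hω l hl
        rw [Real.sign_of_neg hlneg] at h1
        show T l ω ≤ c₁
        rw [hc1c2]; linarith
      obtain ⟨p, q, hpm, hqm, hp0, hq0, heqp, heqq, hlr⟩ := hMMLR i₀ hθ0 hmin l hl
      have hdom : (Pr {ω | T l ω ≤ c₁}).toReal ≤ (Pr {ω | T i₀ ω ≤ c₁}).toReal := by
        have := aux_dominance Pr
          (g := fun ω (l' : Fin (l:ℕ)) => T (Fin.castLE l.isLt.le l') ω)
          (measurable_pi_lambda _ fun l' => hT _) (hT l) (hT i₀) hpm hqm hp0 hq0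
          (fun A hA B hB => by
            have := heqp A hA B hB
            convert this using 2)
          (fun A hA B hB => by
            have := heqq A hA B hB
            convert this using 2)
          hlr c₁
        convert this using 3
      have hhalf : (Pr {ω | T i₀ ω ≤ c₁}).toReal = α/2 := by
        rw [hPle, hθ0, hc₁]
      have hgg : (Pr (G (i₀:ℕ))).toReal ≤ α/2 := by
        rw [← hhalf]; exact le_trans hgle hdom
      have hGN : (Pr (G (i₀:ℕ) ∩ {ω | T i₀ ω ≤ c₁ ∨ c₂ ≤ T i₀ ω})).toReal
          ≤ (Pr (G (i₀:ℕ))).toReal :=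
        ENNReal.toReal_mono (measure_ne_top Pr _) (measure_mono Set.inter_subset_left)
      nlinarith [ENNReal.toReal_nonneg (a := Pr (G (i₀:ℕ)))]
    · -- Case B : all parameters before i₀ are positive
      push_neg at hex
      have hpos : ∀ lf : Fin n, lf < i₀ → 0 < θ lf := by
        intro lf hlf
        rcases lt_trichotomy (θ lf) 0 with h | h | h
        · linarith [hex lf hlf]
        · exact absurd h (hmin lf hlf)
        · exact h
      set Gpos : Set Ω := {ω | ∀ l' : Fin (i₀:ℕ), c₂ ≤ T (Fin.castLE i₀.isLt.le l') ω}
        with hGposdef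
      have hGeq : G ((i₀:Fin n):ℕ) = Gpos := by
        ext ω
        simp only [hGdef, hGposdef, Set.mem_setOf_eq]
        constructor
        · intro h l'
          have hlt : ((Fin.castLE i₀.isLt.le l' : Fin n):ℕ) < (i₀:ℕ) := l'.isLt
          have := h (Fin.castLE i₀.isLt.le l') hlt
          rwa [Real.sign_of_pos (hpos _ hlt), one_mul] at this
        · intro h j hj
          have := h ⟨(j:ℕ), hj⟩
          have hje : Fin.castLE i₀.isLt.le ⟨(j:ℕ), hj⟩ = j := by
            apply Fin.ext; rfl
          rw [hje] at this
          rw [Real.sign_of_pos (hpos j hj), one_mul]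
          exact this
      have hGposmeas : MeasurableSet Gpos := by
        rw [hGposdef, Set.setOf_forall]
        exact MeasurableSet.iInter fun l' =>
          measurableSet_le measurable_const (hT _)
      -- identify the trivial conditioning σ-algebra
      have hbotinst : (inferInstance : MeasurableSpace (Fin 0 → ℝ)) = ⊥ := by
        refine MeasurableSpace.ext fun s => ?_
        rw [MeasurableSpace.measurableSet_bot_iff]
        constructor
        · intro _
          rcases Set.eq_empty_or_nonempty s with h | h
          · exact Or.inl h
          · refine Or.inr (Set.eq_univ_of_forall fun x => ?_)
            obtain ⟨y, hy⟩ := h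
            rwa [Subsingleton.elim x y]
        · rintro (rfl | rfl)
          · exact MeasurableSet.empty
          · exact MeasurableSet.univ
      -- the monotone indicator of Gpos on the prefix variables
      set V : Set (Fin (i₀:ℕ) → ℝ) := {x | ∀ l', c₂ ≤ x l'} with hVdef
      have hVmeas : MeasurableSet V := by
        rw [hVdef, Set.setOf_forall]
        exact MeasurableSet.iInter fun l' =>
          measurableSet_le measurable_const (measurable_pi_apply l')
      set φ : (Fin (i₀:ℕ) → ℝ) → ℝ := fun x => if x ∈ V then 1 else 0 with hφdef
      have hφmeas : Measurable φ := Measurable.ite hVmeas measurable_const measurable_const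
      have hφmono : Monotone φ := by
        intro x y hxy
        by_cases hx : x ∈ V
        · have hy : y ∈ V := fun l' => le_trans (hx l') (hxy l')
          simp [hφdef, hx, hy]
        · have : φ x = 0 := by simp [hφdef, hx]
          rw [this]
          by_cases hy : y ∈ V <;> simp [hφdef, hy]
      have hφnn : ∀ x, 0 ≤ φ x := by
        intro x; by_cases h : x ∈ V <;> simp [hφdef, h]
      have hφbdd : ∃ C, ∀ x, φ x ≤ C := by
        refine ⟨1, fun x => ?_⟩
        by_cases h : x ∈ V <;> simp [hφdef, h]
      have happ := (h5 i₀ hθ0 hmin 0 (Nat.zero_le _) φ hφmeas hφmono hφnn hφbdd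
        c₁ c₂ (le_of_lt hc12)).2
      rw [show MeasurableSpace.comap
          (fun ω'' (l : Fin 0) => T (Fin.castLE ((Nat.zero_le (i₀:ℕ)).trans i₀.isLt.le) l) ω'')
          inferInstance = ⊥ by rw [hbotinst]; exact MeasurableSpace.comap_bot] at happ
      simp only [condExp_bot] at happ
      obtain ⟨ω₀, hineq⟩ := happ.exists
      -- identify the four integrals
      have hf1 : (fun ω' => φ (fun l => T (Fin.castLE i₀.isLt.le l) ω')
          * (if T i₀ ω' < c₁ then (1:ℝ) else 0))
          = (Gpos ∩ {ω | T i₀ ω < c₁}).indicator (fun _ => (1:ℝ)) := by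
        funext ω'
        rw [Set.indicator_apply]
        by_cases hg : ω' ∈ Gpos
        · have hmem : (fun l => T (Fin.castLE i₀.isLt.le l) ω') ∈ V := fun l' => hg l'
          by_cases ht : T i₀ ω' < c₁
          · simp [hφdef, hmem, ht, hg, Set.mem_inter_iff, Set.mem_setOf_eq]
          · simp [hφdef, ht, Set.mem_inter_iff, Set.mem_setOf_eq]
        · have hnmem : (fun l => T (Fin.castLE i₀.isLt.le l) ω') ∉ V := fun hc => hg hc
          simp [hφdef, hnmem, hg, Set.mem_inter_iff, Set.mem_setOf_eq]
      have hf3 : (fun ω' => φ (fun l => T (Fin.castLE i₀.isLt.le l) ω')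
          * (if T i₀ ω' < c₂ then (1:ℝ) else 0))
          = (Gpos ∩ {ω | T i₀ ω < c₂}).indicator (fun _ => (1:ℝ)) := by
        funext ω'
        rw [Set.indicator_apply]
        by_cases hg : ω' ∈ Gpos
        · have hmem : (fun l => T (Fin.castLE i₀.isLt.le l) ω') ∈ V := fun l' => hg l'
          by_cases ht : T i₀ ω' < c₂
          · simp [hφdef, hmem, ht, hg, Set.mem_inter_iff, Set.mem_setOf_eq]
          · simp [hφdef, ht, Set.mem_inter_iff, Set.mem_setOf_eq]
        · have hnmem : (fun l => T (Fin.castLE i₀.isLt.le l) ω') ∉ V := fun hc => hg hc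
          simp [hφdef, hnmem, hg, Set.mem_inter_iff, Set.mem_setOf_eq]
      have hf2 : (fun ω' => (if T i₀ ω' < c₂ then (1:ℝ) else 0))
          = ({ω | T i₀ ω < c₂}).indicator (fun _ => (1:ℝ)) := by
        funext ω'
        rw [Set.indicator_apply]
        by_cases ht : T i₀ ω' < c₂
        · simp [ht, Set.mem_setOf_eq]
        · simp [ht, Set.mem_setOf_eq]
      have hf4 : (fun ω' => (if T i₀ ω' < c₁ then (1:ℝ) else 0))
          = ({ω | T i₀ ω < c₁}).indicator (fun _ => (1:ℝ)) := by
        funext ω'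
        rw [Set.indicator_apply]
        by_cases ht : T i₀ ω' < c₁
        · simp [ht, Set.mem_setOf_eq]
        · simp [ht, Set.mem_setOf_eq]
      rw [hf1, hf2, hf3, hf4] at hineq
      rw [integral_indicator_const _ (hGposmeas.inter
          (measurableSet_lt (hT i₀) measurable_const)),
        integral_indicator_const _ (hGposmeas.inter
          (measurableSet_lt (hT i₀) measurable_const)),
        integral_indicator_const _ (measurableSet_lt (hT i₀) measurable_const),
        integral_indicator_const _ (measurableSet_lt (hT i₀) measurable_const)] at hineq
      simp only [smul_eq_mul, mul_one] at hineq
      have hv1 : (Pr {ω | T i₀ ω < c₁}).toReal = α/2 := by rw [hPlt, hθ0, hc₁]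
      have hv2 : (Pr {ω | T i₀ ω < c₂}).toReal = 1 - α/2 := by rw [hPlt, hθ0, hc₂]
      simp only [measureReal_def] at hineq
      rw [hv1, hv2] at hineq
      -- hineq : L' * (1-α/2) ≤ X * (α/2)
      set L' := (Pr (Gpos ∩ {ω | T i₀ ω < c₁})).toReal with hL'def
      set X := (Pr (Gpos ∩ {ω | T i₀ ω < c₂})).toReal with hXdef
      have hX0 : 0 ≤ X := ENNReal.toReal_nonneg
      have hLκX : L' ≤ κ * X := by
        rw [hκdef, div_mul_eq_mul_div, le_div_iff₀ h1α2]
        linarith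
      -- the remaining bookkeeping
      have hatom0 : Pr ({ω | T i₀ ω ≤ c₁} \ {ω | T i₀ ω < c₁}) = 0 := by
        have heqm : Pr {ω | T i₀ ω ≤ c₁} = Pr {ω | T i₀ ω < c₁} := by
          refine (ENNReal.toReal_eq_toReal_iff' (measure_ne_top Pr _) (measure_ne_top Pr _)).1 ?_
          rw [hPle, hPlt]
        rw [measure_diff (Set.setOf_subset_setOf.2 fun ω h => le_of_lt h)
          (measurableSet_lt (hT i₀) measurable_const).nullMeasurableSet
          (measure_ne_top Pr _), heqm, tsub_self]
      have hLbd : (Pr (Gpos ∩ {ω | T i₀ ω ≤ c₁})).toReal ≤ L' := by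
        have hsub : Gpos ∩ {ω | T i₀ ω ≤ c₁}
            ⊆ (Gpos ∩ {ω | T i₀ ω < c₁}) ∪ ({ω | T i₀ ω ≤ c₁} \ {ω | T i₀ ω < c₁}) := by
          rintro ω ⟨hg, hle⟩
          by_cases h : T i₀ ω < c₁
          · exact Or.inl ⟨hg, h⟩
          · exact Or.inr ⟨hle, h⟩
        refine ENNReal.toReal_mono (measure_ne_top Pr _) ?_
        calc Pr (Gpos ∩ {ω | T i₀ ω ≤ c₁})
            ≤ Pr ((Gpos ∩ {ω | T i₀ ω < c₁}) ∪ ({ω | T i₀ ω ≤ c₁} \ {ω | T i₀ ω < c₁})) :=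
              measure_mono hsub
          _ ≤ Pr (Gpos ∩ {ω | T i₀ ω < c₁})
              + Pr ({ω | T i₀ ω ≤ c₁} \ {ω | T i₀ ω < c₁}) := measure_union_le _ _
          _ = Pr (Gpos ∩ {ω | T i₀ ω < c₁}) := by rw [hatom0, add_zero]
      set U' := (Pr (Gpos ∩ {ω | c₂ ≤ T i₀ ω})).toReal with hU'def
      have hUbd : U' ≤ α/2 := by
        rw [hU'def]
        have := ENNReal.toReal_mono (measure_ne_top Pr _)
          (measure_mono (Set.inter_subset_right
            (s := Gpos) (t := {ω | c₂ ≤ T i₀ ω})))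
        rw [hPge, hθ0, hc₂] at this
        linarith [this]
      have hXU : X + U' = (Pr Gpos).toReal := by
        have hdiff : Gpos \ {ω | T i₀ ω < c₂} = Gpos ∩ {ω | c₂ ≤ T i₀ ω} := by
          rw [Set.diff_eq]
          congr 1
          ext ω; simp [not_lt]
        have := measure_inter_add_diff (μ := Pr) (t := {ω | T i₀ ω < c₂}) Gpos
          (measurableSet_lt (hT i₀) measurable_const)
        rw [hdiff] at this
        rw [hXdef, hU'def, ← ENNReal.toReal_add (measure_ne_top Pr _) (measure_ne_top Pr _),
          this]
      have hsplitN : (Pr (Gpos ∩ {ω | T i₀ ω ≤ c₁ ∨ c₂ ≤ T i₀ ω})).toReal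
          ≤ (Pr (Gpos ∩ {ω | T i₀ ω ≤ c₁})).toReal + U' := by
        have hsub : Gpos ∩ {ω | T i₀ ω ≤ c₁ ∨ c₂ ≤ T i₀ ω}
            ⊆ (Gpos ∩ {ω | T i₀ ω ≤ c₁}) ∪ (Gpos ∩ {ω | c₂ ≤ T i₀ ω}) := by
          rintro ω ⟨hg, (h | h)⟩
          · exact Or.inl ⟨hg, h⟩
          · exact Or.inr ⟨hg, h⟩
        refine le_trans (ENNReal.toReal_mono (measure_ne_top Pr _) (measure_mono hsub)) ?_
        exact htoReal_union _ _
      rw [hGeq]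
      calc (Pr (Gpos ∩ {ω | T i₀ ω ≤ c₁ ∨ c₂ ≤ T i₀ ω})).toReal
          ≤ (Pr (Gpos ∩ {ω | T i₀ ω ≤ c₁})).toReal + U' := hsplitN
        _ ≤ L' + U' := by linarith
        _ ≤ κ * X + U' := by linarith
        _ = κ * ((Pr Gpos).toReal - U') + U' := by rw [← hXU]; ring_nf
        _ = κ * (Pr Gpos).toReal + (1-κ) * U' := by ring
        _ ≤ κ * (Pr Gpos).toReal + (1-κ)*(α/2) := by nlinarith [hUbd, hκ1]

  -- small p-values force the tails
  have hw1 : ∀ (j : Fin n) (ω : Ω), 2 * min (F 0 (T j ω)) (1 - F 0 (T j ω)) ≤ α →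
      T j ω ≤ c₁ ∨ c₂ ≤ T j ω := by
    intro j ω h
    rcases le_or_gt (F 0 (T j ω)) (1 - F 0 (T j ω)) with hm | hm
    · left
      have h1 : F 0 (T j ω) ≤ α/2 := by rw [min_eq_left hm] at h; linarith
      have h2 : F 0 (T j ω) ≤ F 0 c₁ := by rw [hc₁]; exact h1
      exact (hF0strict.le_iff_le).1 h2
    · right
      have h1 : 1 - F 0 (T j ω) ≤ α/2 := by rw [min_eq_right (le_of_lt hm)] at h; linarith
      have h2 : F 0 c₂ ≤ F 0 (T j ω) := by rw [hc₂]; linarith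
      exact (hF0strict.le_iff_le).1 h2
  -- the witness predicate
  set Wit : Fin n → Ω → Prop := fun i ω =>
    (∀ j : Fin n, j ≤ i → 2 * min (F 0 (T j ω)) (1 - F 0 (T j ω)) ≤ α) ∧
      (θ i = 0 ∨ (θ i ≠ 0 ∧ θ i * T i ω < 0)) with hWitdef
  -- analysis of the minimal witness
  have hminwit : ∀ ω : Ω, (∃ i : Fin n, Wit i ω) →
      ∃ istar : Fin n, Wit istar ω ∧ (∀ j : Fin n, j < istar → ¬ Wit j ω) := by
    intro ω hex
    obtain ⟨i, hi⟩ := hex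
    have hQ : ∃ k : ℕ, ∃ h : k < n, Wit ⟨k, h⟩ ω := ⟨(i:ℕ), i.isLt, by rw [Fin.eta]; exact hi⟩
    obtain ⟨hkn, hwit⟩ := Nat.find_spec hQ
    refine ⟨⟨Nat.find hQ, hkn⟩, hwit, ?_⟩
    intro j hj hWj
    exact Nat.find_min hQ (show (j:ℕ) < Nat.find hQ from hj) ⟨j.isLt, by rw [Fin.eta]; exact hWj⟩
  have hkey : ∀ ω : Ω, ∀ istar : Fin n, Wit istar ω → (∀ j : Fin n, j < istar → ¬ Wit j ω) →
      (∀ j : Fin n, j < istar → θ j ≠ 0 ∧ 0 ≤ θ j * T j ω)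
      ∧ (∀ j : Fin n, j < istar → c₂ ≤ Real.sign (θ j) * T j ω) := by
    intro ω istar hwit hminw
    have hple : ∀ j : Fin n, j ≤ istar →
        2 * min (F 0 (T j ω)) (1 - F 0 (T j ω)) ≤ α := hwit.1
    have hno : ∀ j : Fin n, j < istar → θ j ≠ 0 ∧ 0 ≤ θ j * T j ω := by
      intro j hj
      have hnw := hminw j hj
      have hpj : ∀ j' : Fin n, j' ≤ j → 2 * min (F 0 (T j' ω)) (1 - F 0 (T j' ω)) ≤ α :=
        fun j' hj' => hple j' (le_trans hj' (le_of_lt hj))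
      have herrn : ¬(θ j = 0 ∨ (θ j ≠ 0 ∧ θ j * T j ω < 0)) := fun he => hnw ⟨hpj, he⟩
      push_neg at herrn
      exact ⟨herrn.1, herrn.2 herrn.1⟩
    refine ⟨hno, ?_⟩
    intro j hj
    obtain ⟨hθj, hsgn0⟩ := hno j hj
    rcases hw1 j ω (hple j (le_of_lt hj)) with hle | hge
    · have hTneg : T j ω < 0 := lt_of_le_of_lt hle hc1neg
      have hθneg : θ j < 0 := by
        rcases lt_trichotomy (θ j) 0 with h | h | h
        · exact h
        · exact absurd h hθj
        · nlinarith
      rw [Real.sign_of_neg hθneg]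
      rw [hc1c2] at hle; linarith
    · have hTpos : 0 < T j ω := lt_of_lt_of_le hc2pos hge
      have hθpos : 0 < θ j := by
        rcases lt_trichotomy (θ j) 0 with h | h | h
        · nlinarith
        · exact absurd h hθj
        · exact h
      rw [Real.sign_of_pos hθpos, one_mul]; exact hge
  have hkey2 : ∀ ω : Ω, ∀ istar : Fin n, Wit istar ω → θ istar ≠ 0 → θ istar * T istar ω < 0 →
      Real.sign (θ istar) * T istar ω ≤ c₁ := by
    intro ω istar hwit hθne hprod
    rcases hw1 istar ω (hwit.1 istar le_rfl) with hle | hge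
    · have hTneg : T istar ω < 0 := lt_of_le_of_lt hle hc1neg
      have hθpos : 0 < θ istar := by
        rcases lt_trichotomy (θ istar) 0 with h | h | h
        · nlinarith
        · exact absurd h hθne
        · exact h
      rw [Real.sign_of_pos hθpos, one_mul]; exact hle
    · have hTpos : 0 < T istar ω := lt_of_lt_of_le hc2pos hge
      have hθneg : θ istar < 0 := by
        rcases lt_trichotomy (θ istar) 0 with h | h | h
        · exact h
        · exact absurd h hθne
        · nlinarith
      rw [Real.sign_of_neg hθneg]
      rw [hc1c2]; linarith
  -- final assembly
  by_cases hnull : ∃ i : Fin n, θ i = 0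
  · -- there is a true null; let i₀ be the first one
    obtain ⟨inull, hinull⟩ := hnull
    have hPex : ∃ k : ℕ, ∃ h : k < n, θ ⟨k, h⟩ = 0 :=
      ⟨(inull:ℕ), inull.isLt, by rw [Fin.eta]; exact hinull⟩
    obtain ⟨hk0n, hθ0⟩ := Nat.find_spec hPex
    set i₀ : Fin n := ⟨Nat.find hPex, hk0n⟩ with hi₀def
    have hmin : ∀ l : Fin n, l < i₀ → θ l ≠ 0 := by
      intro l hl hzero
      exact Nat.find_min hPex (show (l:ℕ) < Nat.find hPex from hl)
        ⟨l.isLt, by rw [Fin.eta]; exact hzero⟩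
    have hincl : {ω | ∃ i : Fin n,
        (∀ j : Fin n, j ≤ i → 2 * min (F 0 (T j ω)) (1 - F 0 (T j ω)) ≤ α) ∧
        (θ i = 0 ∨ (θ i ≠ 0 ∧ θ i * T i ω < 0))}
        ⊆ (⋃ i : Fin n, ⋃ (_ : (i:ℕ) < (i₀:ℕ)),
            (G (i:ℕ) ∩ {ω | Real.sign (θ i) * T i ω ≤ c₁}))
          ∪ (G ((i₀:Fin n):ℕ) ∩ {ω | T i₀ ω ≤ c₁ ∨ c₂ ≤ T i₀ ω}) := by
      intro ω hω
      obtain ⟨istar, hwit, hminw⟩ := hminwit ω hω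
      obtain ⟨hno, hS⟩ := hkey ω istar hwit hminw
      have hle0 : istar ≤ i₀ := by
        by_contra hgt
        push_neg at hgt
        exact (hno i₀ hgt).1 hθ0
      rcases hwit.2 with hz | hnz
      · have hge0 : i₀ ≤ istar := by
          by_contra hlt
          push_neg at hlt
          exact hmin istar hlt hz
        have hEeq : istar = i₀ := le_antisymm hle0 hge0
        refine Or.inr ⟨?_, ?_⟩
        · intro j hj
          refine hS j ?_
          rw [hEeq]
          exact hj
        · exact hw1 i₀ ω (hwit.1 i₀ (le_of_eq hEeq.symm))
      · refine Or.inl ?_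
        have hlt0 : istar < i₀ := lt_of_le_of_ne hle0 (fun h => hnz.1 (h ▸ hθ0))
        refine Set.mem_iUnion.2 ⟨istar, Set.mem_iUnion.2 ⟨hlt0, ?_, ?_⟩⟩
        · exact fun j hj => hS j hj
        · exact hkey2 ω istar hwit hnz.1 hnz.2
    have htelA := htel (i₀:ℕ) i₀.isLt.le (fun j hj => hmin j hj) (i₀:ℕ) le_rfl
    have hmas := hmaster i₀ hθ0 hmin
    have hmono1 : (Pr {ω | ∃ i : Fin n,
        (∀ j : Fin n, j ≤ i → 2 * min (F 0 (T j ω)) (1 - F 0 (T j ω)) ≤ α) ∧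
        (θ i = 0 ∨ (θ i ≠ 0 ∧ θ i * T i ω < 0))}).toReal
        ≤ (Pr ((⋃ i : Fin n, ⋃ (_ : (i:ℕ) < (i₀:ℕ)),
            (G (i:ℕ) ∩ {ω | Real.sign (θ i) * T i ω ≤ c₁}))
          ∪ (G ((i₀:Fin n):ℕ) ∩ {ω | T i₀ ω ≤ c₁ ∨ c₂ ≤ T i₀ ω}))).toReal :=
      ENNReal.toReal_mono (measure_ne_top Pr _) (measure_mono hincl)
    have hg0 : 0 ≤ (Pr (G ((i₀:Fin n):ℕ))).toReal := ENNReal.toReal_nonneg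
    calc (Pr {ω | ∃ i : Fin n,
        (∀ j : Fin n, j ≤ i → 2 * min (F 0 (T j ω)) (1 - F 0 (T j ω)) ≤ α) ∧
        (θ i = 0 ∨ (θ i ≠ 0 ∧ θ i * T i ω < 0))}).toReal
        ≤ (Pr ((⋃ i : Fin n, ⋃ (_ : (i:ℕ) < (i₀:ℕ)),
            (G (i:ℕ) ∩ {ω | Real.sign (θ i) * T i ω ≤ c₁}))
          ∪ (G ((i₀:Fin n):ℕ) ∩ {ω | T i₀ ω ≤ c₁ ∨ c₂ ≤ T i₀ ω}))).toReal := hmono1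
      _ ≤ (Pr (⋃ i : Fin n, ⋃ (_ : (i:ℕ) < (i₀:ℕ)),
            (G (i:ℕ) ∩ {ω | Real.sign (θ i) * T i ω ≤ c₁}))).toReal
          + (Pr (G ((i₀:Fin n):ℕ) ∩ {ω | T i₀ ω ≤ c₁ ∨ c₂ ≤ T i₀ ω})).toReal :=
          htoReal_union _ _
      _ ≤ κ * (1 - (Pr (G ((i₀:Fin n):ℕ))).toReal)
          + (κ * (Pr (G ((i₀:Fin n):ℕ))).toReal + (1-κ)*(α/2)) := by
          linarith
      _ = κ + (1-κ)*(α/2) := by ring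
      _ = α := hfinalκ
  · -- no true null at all
    have hall : ∀ i : Fin n, θ i ≠ 0 := fun i h => hnull ⟨i, h⟩
    have hincl : {ω | ∃ i : Fin n,
        (∀ j : Fin n, j ≤ i → 2 * min (F 0 (T j ω)) (1 - F 0 (T j ω)) ≤ α) ∧
        (θ i = 0 ∨ (θ i ≠ 0 ∧ θ i * T i ω < 0))}
        ⊆ ⋃ i : Fin n, ⋃ (_ : (i:ℕ) < n),
            (G (i:ℕ) ∩ {ω | Real.sign (θ i) * T i ω ≤ c₁}) := by
      intro ω hω
      obtain ⟨istar, hwit, hminw⟩ := hminwit ω hω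
      obtain ⟨hno, hS⟩ := hkey ω istar hwit hminw
      rcases hwit.2 with hz | hnz
      · exact absurd hz (hall istar)
      · refine Set.mem_iUnion.2 ⟨istar, Set.mem_iUnion.2 ⟨istar.isLt, ?_, ?_⟩⟩
        · exact fun j hj => hS j hj
        · exact hkey2 ω istar hwit hnz.1 hnz.2
    have htelB := htel n le_rfl (fun j _ => hall j) n le_rfl
    have hg0 : 0 ≤ (Pr (G n)).toReal := ENNReal.toReal_nonneg
    calc (Pr {ω | ∃ i : Fin n,
        (∀ j : Fin n, j ≤ i → 2 * min (F 0 (T j ω)) (1 - F 0 (T j ω)) ≤ α) ∧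
        (θ i = 0 ∨ (θ i ≠ 0 ∧ θ i * T i ω < 0))}).toReal
        ≤ (Pr (⋃ i : Fin n, ⋃ (_ : (i:ℕ) < n),
            (G (i:ℕ) ∩ {ω | Real.sign (θ i) * T i ω ≤ c₁}))).toReal :=
          ENNReal.toReal_mono (measure_ne_top Pr _) (measure_mono hincl)
      _ ≤ κ * (1 - (Pr (G n)).toReal) := htelB
      _ ≤ κ := by nlinarith
      _ ≤ α := hκα
end
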